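/- arXiv:2206.08001 — 4 statements merged into one kernel-verified Lean document; each statement's English description precedes it below -/
import Mathlib

section
/- There is an absolute constant C > 0 such that the following holds for all sufficiently large integers N. Set Y := N/(2·log N) and w(n) := (n/Y)^{-1/2} · e^{-n/Y} for positive integers n. Then for all real σ, γ with 0 ≤ σ ≤ 1/4 and |γ| ≤ N^{1/4}, for ρ := 1 - σ + iγ, and for all η ∈ ℝ with ‖η‖ > N^{-1/2}: |Σ_{n=1}^{N} n^{ρ-1} · w(n) · e(ηn)| ≤ C · N^{1 - 1/12}. -/
/-- `e(θ) = exp(2πiθ)`. -/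
noncomputable def e (θ : ℝ) : ℂ := Complex.exp (2 * Real.pi * Complex.I * θ)

section helpers

lemma tele1 (N : ℕ) : ∑ n ∈ Finset.Icc 1 N, (1:ℝ)/Real.sqrt n ≤ 2 * Real.sqrt N := by
  induction N with
  | zero => simp
  | succ k ih =>
    rw [Finset.sum_Icc_succ_top (by omega)]
    have h1 : (0:ℝ) ≤ (k:ℝ) := k.cast_nonneg
    have hs : (0:ℝ) < Real.sqrt ((k:ℝ)+1) := Real.sqrt_pos.2 (by linarith)
    have hsk : (0:ℝ) ≤ Real.sqrt k := Real.sqrt_nonneg _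
    have h2 : Real.sqrt k ^ 2 = (k:ℝ) := Real.sq_sqrt h1
    have h3 : Real.sqrt ((k:ℝ)+1) ^ 2 = (k:ℝ)+1 := Real.sq_sqrt (by linarith)
    have h4 : (Real.sqrt k * Real.sqrt ((k:ℝ)+1)) ^ 2 = (k:ℝ) * ((k:ℝ)+1) := by
      rw [mul_pow, h2, h3]
    have key : 1 / Real.sqrt ((k:ℝ)+1) ≤ 2*(Real.sqrt ((k:ℝ)+1) - Real.sqrt k) := by
      rw [div_le_iff₀ hs]
      nlinarith [mul_nonneg hsk hs.le, sq_nonneg (Real.sqrt k * Real.sqrt ((k:ℝ)+1) - ((k:ℝ) + 1/2))]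
    push_cast
    linarith
lemma tele2 (M : ℕ) (hM : 1 ≤ M) : ∀ N, M ≤ N →
    ∑ n ∈ Finset.Icc (M+1) N, (1:ℝ)/((n:ℝ) * Real.sqrt n) ≤ 2 / Real.sqrt M := by
  have main : ∀ N, M ≤ N →
      ∑ n ∈ Finset.Icc (M+1) N, (1:ℝ)/((n:ℝ) * Real.sqrt n) ≤ 2 / Real.sqrt M - 2 / Real.sqrt N := by
    intro N hN
    induction N, hN using Nat.le_induction with
    | base => simp
    | succ k hk ih =>
      rw [Finset.sum_Icc_succ_top (by omega)]
      have h1 : (1:ℝ) ≤ (k:ℝ) := by exact_mod_cast hM.trans hk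
      have hs : (0:ℝ) < Real.sqrt ((k:ℝ)+1) := Real.sqrt_pos.2 (by linarith)
      have hsk : (0:ℝ) < Real.sqrt k := Real.sqrt_pos.2 (by linarith)
      have h2 : Real.sqrt k ^ 2 = (k:ℝ) := Real.sq_sqrt (by linarith)
      have h3 : Real.sqrt ((k:ℝ)+1) ^ 2 = (k:ℝ)+1 := Real.sq_sqrt (by linarith)
      have h4 : (Real.sqrt k * Real.sqrt ((k:ℝ)+1)) ^ 2 = (k:ℝ) * ((k:ℝ)+1) := by
        rw [mul_pow, h2, h3]
      have key : 1 / (((k:ℝ)+1) * Real.sqrt ((k:ℝ)+1)) ≤ 2 / Real.sqrt k - 2 / Real.sqrt ((k:ℝ)+1) := by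
      -- 1/(b^2 * b) ≤ 2/a - 2/b  ⇔  a*b ≤ 2(b-a)*b^3 ... prove via clearing denominators
        rw [div_sub_div _ _ hsk.ne' hs.ne', div_le_div_iff₀ (by positivity) (by positivity)]
        -- 1 * (√k * √(k+1)) ≤ (2√(k+1) - 2√k) * ((k+1) * √(k+1))
        nlinarith [mul_nonneg hsk.le hs.le, sq_nonneg (Real.sqrt k * Real.sqrt ((k:ℝ)+1) - ((k:ℝ) + 1/2)), mul_pos hsk hs]
      push_cast
      linarith
  intro N hN
  have := main N hN
  have : 2 / Real.sqrt N ≥ 0 := by positivity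
  linarith [main N hN]
lemma expdist (η : ℝ) :
    4 * |η - round η| ≤ ‖Complex.exp (2 * Real.pi * Complex.I * η) - 1‖ := by
  set θ : ℝ := η - round η with hθ
  have hrepr : Complex.exp (2 * Real.pi * Complex.I * η) = Complex.exp ((2 * Real.pi * θ) * Complex.I) := by
    have : (η:ℂ) = (θ:ℂ) + (round η : ℤ) := by push_cast [hθ]; ring
    rw [this]
    rw [mul_add, Complex.exp_add]
    have : (2:ℂ) * Real.pi * Complex.I * ((round η : ℤ):ℂ) = ((round η : ℤ):ℂ) * (2 * Real.pi * Complex.I) := by ring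
    rw [this, Complex.exp_int_mul_two_pi_mul_I, mul_one]
    ring_nf
  rw [hrepr]
  have hcast : (2 * (Real.pi:ℂ) * (θ:ℂ)) = ((2 * Real.pi * θ : ℝ):ℂ) := by push_cast; ring
  have hre : (Complex.exp ((2 * Real.pi * θ) * Complex.I) - 1).re = Real.cos (2 * Real.pi * θ) - 1 := by
    rw [hcast, Complex.sub_re, Complex.exp_ofReal_mul_I_re, Complex.one_re]
  have him : (Complex.exp ((2 * Real.pi * θ) * Complex.I) - 1).im = Real.sin (2 * Real.pi * θ) := by
    rw [hcast, Complex.sub_im, Complex.exp_ofReal_mul_I_im, Complex.one_im, sub_zero]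
  have habs : ‖Complex.exp ((2 * Real.pi * θ) * Complex.I) - 1‖
      = Real.sqrt ((Real.cos (2 * Real.pi * θ) - 1)^2 + (Real.sin (2 * Real.pi * θ))^2) := by
    rw [Complex.norm_def, Complex.normSq_apply, hre, him]; ring_nf
  rw [habs]
  have hcos : (Real.cos (2 * Real.pi * θ) - 1)^2 + (Real.sin (2 * Real.pi * θ))^2
      = (2 * |Real.sin (Real.pi * θ)|)^2 := by
    have h2 : (2 * Real.pi * θ) = 2 * (Real.pi * θ) := by ring
    have hdm : Real.cos (2 * Real.pi * θ) = 2 * Real.cos (Real.pi * θ)^2 - 1 := by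
      rw [h2, Real.cos_two_mul]
    have h1 : Real.sin (2*Real.pi*θ)^2 = 1 - Real.cos (2*Real.pi*θ)^2 := by
      have := Real.sin_sq_add_cos_sq (2*Real.pi*θ); linarith
    have hpc : Real.sin (Real.pi*θ)^2 = 1 - Real.cos (Real.pi*θ)^2 := by
      have := Real.sin_sq_add_cos_sq (Real.pi*θ); linarith
    have hexp : (2*|Real.sin (Real.pi*θ)|)^2 = 4 * Real.sin (Real.pi*θ)^2 := by
      rw [mul_pow, sq_abs]; norm_num
    rw [h1, hexp]
    nlinarith [hdm, hpc]
  rw [hcos, Real.sqrt_sq (by positivity)]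
  -- now need 4 |θ| ≤ 2 |sin (π θ)|
  have hb : |θ| ≤ 1/2 := by rw [hθ]; exact abs_sub_round η
  have hsin : 2 * |θ| ≤ |Real.sin (Real.pi * θ)| := by
    have h0 : (0:ℝ) ≤ Real.pi * |θ| := by positivity
    have h1 : Real.pi * |θ| ≤ Real.pi / 2 := by
      nlinarith [Real.pi_pos]
    have := Real.mul_le_sin h0 h1
    have habs' : |Real.sin (Real.pi * θ)| = Real.sin (Real.pi * |θ|) := by
      rcases abs_cases θ with ⟨h, _⟩ | ⟨h, _⟩
      · rw [h]
        exact abs_of_nonneg (Real.sin_nonneg_of_nonneg_of_le_pi (by positivity) (by nlinarith [Real.pi_pos]))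
      · have hsineq : Real.sin (Real.pi * θ) = - Real.sin (Real.pi * -θ) := by
          rw [mul_neg, Real.sin_neg]; ring
        rw [h, hsineq, abs_neg]
        have hnn : 0 ≤ Real.sin (Real.pi * -θ) := by
          apply Real.sin_nonneg_of_nonneg_of_le_pi
          · nlinarith [Real.pi_pos]
          · have : -θ ≤ 1 := by rw [← h]; linarith
            nlinarith [Real.pi_pos]
        exact abs_of_nonneg hnn
    rw [habs']
    calc 2 * |θ| = 2/Real.pi * (Real.pi * |θ|) := by field_simp
    _ ≤ Real.sin (Real.pi * |θ|) := Real.mul_le_sin h0 h1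
  linarith

lemma geom_bound (η : ℝ) (hδ : 0 < |η - round η|) (a k : ℕ) :
    ‖∑ j ∈ Finset.range k, e (η * (a + j))‖ ≤ 1/(2*|η - round η|) := by
  set z : ℂ := Complex.exp (2 * Real.pi * Complex.I * η) with hz
  have hzj : ∀ j : ℕ, e (η * (a + j)) = e (η * a) * z ^ j := by
    intro j
    rw [e, e, hz, ← Complex.exp_nat_mul, ← Complex.exp_add]
    congr 1
    push_cast
    ring
  rw [Finset.sum_congr rfl (fun j _ => hzj j), ← Finset.mul_sum]
  have hz1 : z ≠ 1 := by
    intro h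
    have := expdist η
    rw [← hz, h] at this
    simp at this
    nlinarith
  rw [geom_sum_eq hz1, norm_mul]
  have hea : ‖e (η * a)‖ = 1 := by
    rw [e, Complex.norm_exp]
    have : (2 * ↑Real.pi * Complex.I * ↑(η * ↑a)).re = 0 := by simp
    rw [this, Real.exp_zero]
  rw [hea, one_mul, norm_div]
  have hnum : ‖z ^ k - 1‖ ≤ 2 := by
    have htri : ‖z ^ k - 1‖ ≤ ‖z ^ k‖ + ‖(1:ℂ)‖ := by
      exact norm_sub_le (z ^ k) (1:ℂ)
    have habs1 : ‖z ^ k‖ = 1 := by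
      rw [norm_pow, hz, Complex.norm_exp]
      have : (2 * ↑Real.pi * Complex.I * ↑η).re = 0 := by simp
      rw [this, Real.exp_zero, one_pow]
    rw [habs1, norm_one] at htri
    linarith
  have hden : 4 * |η - round η| ≤ ‖z - 1‖ := expdist η
  have hdenpos : 0 < ‖z - 1‖ := by linarith
  rw [div_le_div_iff₀ hdenpos (by positivity)]
  calc ‖z ^ k - 1‖ * (2 * |η - round η|) ≤ 2 * (2 * |η - round η|) := by
        apply mul_le_mul_of_nonneg_right hnum (by positivity)
  _ ≤ 1 * ‖z - 1‖ := by rw [one_mul]; linarith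
lemma gderiv (c : ℂ) (Y : ℝ) {t : ℝ} (ht : 0 < t) :
    HasDerivAt (fun t : ℝ => Complex.exp (c * (Real.log t : ℂ) - ((t / Y : ℝ) : ℂ)))
      ((c * ((1/t : ℝ):ℂ) - ((1/Y : ℝ):ℂ)) *
        Complex.exp (c * (Real.log t : ℂ) - ((t / Y : ℝ) : ℂ))) t := by
  have h1 : HasDerivAt (fun t : ℝ => c * (Real.log t : ℂ)) (c * ((1/t : ℝ):ℂ)) t := by
    have := ((Real.hasDerivAt_log ht.ne').ofReal_comp (z := t)).const_mul c
    simpa [one_div] using this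
  have h2 : HasDerivAt (fun t : ℝ => ((t / Y : ℝ) : ℂ)) ((1/Y : ℝ):ℂ) t := by
    exact ((hasDerivAt_id t).div_const Y).ofReal_comp
  have h3 := (h1.sub h2).cexp
  convert h3 using 1
  · rfl
  · exact mul_comm _ _
lemma gnorm (c : ℂ) (Y t : ℝ) :
    ‖Complex.exp (c * (Real.log t : ℂ) - ((t / Y : ℝ) : ℂ))‖
      = Real.exp (c.re * Real.log t - t / Y) := by
  rw [Complex.norm_exp]
  congr 1
  simp [Complex.sub_re, Complex.mul_re]
lemma gbound (c : ℂ) (Y σ : ℝ) (hσ0 : 0 ≤ σ) (hcre : c.re = -σ - 1/2) (hY0 : 0 < Y)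
    (t : ℝ) (ht : 1 ≤ t) :
    ‖Complex.exp (c * (Real.log t : ℂ) - ((t / Y : ℝ) : ℂ))‖ ≤ 1 / Real.sqrt t := by
  have ht0 : (0:ℝ) < t := by linarith
  rw [gnorm c Y t, hcre]
  have hlog : 0 ≤ Real.log t := Real.log_nonneg ht
  have htY : 0 ≤ t/Y := by positivity
  have hyp : 0 ≤ σ * Real.log t := mul_nonneg hσ0 hlog
  calc Real.exp ((-σ - 1/2) * Real.log t - t / Y)
      ≤ Real.exp (Real.log t * (-(1/2))) := by
        apply Real.exp_le_exp.2
        nlinarith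
  _ = t ^ (-(1/2) : ℝ) := (Real.rpow_def_of_pos ht0 _).symm
  _ = 1 / Real.sqrt t := by
      rw [Real.rpow_neg ht0.le, ← Real.sqrt_eq_rpow, one_div]

lemma gdiff (c : ℂ) (Y σ γ : ℝ) (hσ0 : 0 ≤ σ) (hσh : σ ≤ 1/2) (hcre : c.re = -σ - 1/2)
    (hcim : c.im = γ) (hY0 : 0 < Y) (n : ℕ) (hn : 1 ≤ n) :
    ‖Complex.exp (c * (Real.log ((n:ℝ)+1) : ℂ) - ((((n:ℝ)+1) / Y : ℝ) : ℂ)) -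
      Complex.exp (c * (Real.log (n:ℝ) : ℂ) - (((n:ℝ) / Y : ℝ) : ℂ))‖ ≤
      (1+|γ|) * (1/((n:ℝ) * Real.sqrt n)) + (1/Y) * (1/Real.sqrt n) := by
  have hcabs : ‖c‖ ≤ (σ + 1/2) + |γ| := by
    calc ‖c‖ ≤ |c.re| + |c.im| := Complex.norm_le_abs_re_add_abs_im c
    _ = (σ + 1/2) + |γ| := by
        rw [hcre, hcim, abs_of_nonpos (by linarith)]
        ring
  have hn1 : (1:ℝ) ≤ (n:ℝ) := by exact_mod_cast hn
  have hn0 : (0:ℝ) < (n:ℝ) := by linarith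
  have hsn0 : (0:ℝ) < Real.sqrt n := Real.sqrt_pos.2 hn0
  have key : ∀ x ∈ Set.Icc (n:ℝ) ((n:ℝ)+1),
      ‖(c * ((1/x : ℝ):ℂ) - ((1/Y : ℝ):ℂ)) *
        Complex.exp (c * (Real.log x : ℂ) - ((x / Y : ℝ) : ℂ))‖ ≤
        ((σ + 1/2)+|γ|) * (1/((n:ℝ) * Real.sqrt n)) + (1/Y) * (1/Real.sqrt n) := by
    intro x hx
    obtain ⟨hx1, hx2⟩ := hx
    have hx0 : (1:ℝ) ≤ x := le_trans hn1 hx1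
    have hxpos : (0:ℝ) < x := by linarith
    rw [norm_mul]
    have h1 : ‖c * ((1/x:ℝ):ℂ) - ((1/Y:ℝ):ℂ)‖ ≤ ((σ + 1/2)+|γ|) * (1/(n:ℝ)) + 1/Y := by
      calc ‖c * ((1/x:ℝ):ℂ) - ((1/Y:ℝ):ℂ)‖
          ≤ ‖c * ((1/x:ℝ):ℂ)‖ + ‖((1/Y:ℝ):ℂ)‖ := norm_sub_le _ _
      _ = ‖c‖ * (1/x) + 1/Y := by
          rw [norm_mul, Complex.norm_real, Complex.norm_real,
            Real.norm_eq_abs, Real.norm_eq_abs, abs_of_pos (by positivity),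
            abs_of_pos (by positivity)]
      _ ≤ ((σ + 1/2)+|γ|) * (1/(n:ℝ)) + 1/Y := by
          have h1x : (1:ℝ)/x ≤ 1/(n:ℝ) := one_div_le_one_div_of_le hn0 hx1
          have h1x0 : (0:ℝ) < 1/x := by positivity
          have e1 : ‖c‖ * (1/x) ≤ ((σ + 1/2)+|γ|) * (1/x) :=
            mul_le_mul_of_nonneg_right hcabs h1x0.le
          have e2 : ((σ + 1/2)+|γ|) * (1/x) ≤ ((σ + 1/2)+|γ|) * (1/(n:ℝ)) :=
            mul_le_mul_of_nonneg_left h1x (by positivity)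
          linarith
    have h2 : ‖Complex.exp (c * (Real.log x : ℂ) - ((x / Y : ℝ) : ℂ))‖ ≤ 1/Real.sqrt (n:ℝ) := by
      calc ‖Complex.exp (c * (Real.log x : ℂ) - ((x / Y : ℝ) : ℂ))‖
          ≤ 1/Real.sqrt x := gbound c Y σ hσ0 hcre hY0 x hx0
      _ ≤ 1/Real.sqrt n := one_div_le_one_div_of_le hsn0 (Real.sqrt_le_sqrt hx1)
    calc ‖c * ((1/x:ℝ):ℂ) - ((1/Y:ℝ):ℂ)‖ *
          ‖Complex.exp (c * (Real.log x : ℂ) - ((x / Y : ℝ) : ℂ))‖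
        ≤ (((σ + 1/2)+|γ|) * (1/(n:ℝ)) + 1/Y) * (1/Real.sqrt n) :=
          mul_le_mul h1 h2 (norm_nonneg _) (by positivity)
    _ = ((σ + 1/2)+|γ|) * (1/((n:ℝ) * Real.sqrt n)) + (1/Y) * (1/Real.sqrt n) := by ring
  have hmvt := (convex_Icc (n:ℝ) ((n:ℝ)+1)).norm_image_sub_le_of_norm_hasDerivWithin_le
    (f := fun t : ℝ => Complex.exp (c * (Real.log t : ℂ) - ((t / Y : ℝ) : ℂ)))
    (f' := fun x => (c * ((1/x : ℝ):ℂ) - ((1/Y : ℝ):ℂ)) *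
      Complex.exp (c * (Real.log x : ℂ) - ((x / Y : ℝ) : ℂ)))
    (fun x hx => (gderiv c Y (lt_of_lt_of_le hn0 hx.1)).hasDerivWithinAt)
    key (Set.left_mem_Icc.2 (by linarith)) (Set.right_mem_Icc.2 (by linarith))
  have hend : (((σ + 1/2)+|γ|) * (1/((n:ℝ) * Real.sqrt n)) + (1/Y) * (1/Real.sqrt n))
        * ‖((n:ℝ)+1) - (n:ℝ)‖
      ≤ (1+|γ|) * (1/((n:ℝ) * Real.sqrt n)) + (1/Y) * (1/Real.sqrt n) := by
    have : ‖((n:ℝ)+1) - (n:ℝ)‖ = 1 := by norm_num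
    rw [this, mul_one]
    have h3 : (0:ℝ) ≤ 1/((n:ℝ) * Real.sqrt n) := by positivity
    have h4 : (σ + 1/2)+|γ| ≤ 1+|γ| := by linarith
    linarith [mul_le_mul_of_nonneg_right h4 h3]
  exact le_trans hmvt hend

lemma enorm (x : ℝ) : ‖e x‖ = 1 := by
  rw [e, Complex.norm_exp]
  have : (2 * ↑Real.pi * Complex.I * (x:ℂ)).re = 0 := by simp
  rw [this, Real.exp_zero]

end helpers

set_option maxHeartbeats 3200000 in
/-- Proposition 12.4: with `Y = N/(2 log N)` and `w(n) = (n/Y)^{-1/2} e^{-n/Y}`, for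
`ρ = 1 - σ + iγ` with `0 ≤ σ ≤ 1/4`, `|γ| ≤ N^{1/4}`, and `‖η‖ > N^{-1/2}`, one has
`|∑_{n ≤ N} n^{ρ-1} w(n) e(ηn)| ≤ C·N^{1 - 1/12}`. -/
theorem prop16_6 :
    ∃ C : ℝ, 0 < C ∧ ∃ N₀ : ℕ, ∀ N : ℕ, N₀ ≤ N →
      ∀ σ γ : ℝ, 0 ≤ σ → σ ≤ 1 / 4 → |γ| ≤ (N : ℝ) ^ ((1 : ℝ) / 4) →
      ∀ η : ℝ, (N : ℝ) ^ (-(1 : ℝ) / 2) < |η - (round η : ℝ)| →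
        ‖∑ n ∈ Finset.Icc 1 N,
            (n : ℂ) ^ ((1 - (σ : ℂ) + (γ : ℂ) * Complex.I) - 1) *
              (((((n : ℝ) / ((N : ℝ) / (2 * Real.log N))) ^ (-(1 : ℝ) / 2) *
                Real.exp (-((n : ℝ) / ((N : ℝ) / (2 * Real.log N))))) : ℝ) : ℂ) *
              e (η * n)‖ ≤
          C * (N : ℝ) ^ (1 - (1 : ℝ) / 12) := by
  refine ⟨10, by norm_num, 100, ?_⟩
  intro N hN σ γ hσ0 hσ4 hγ η hη
  set R : ℝ := (N:ℝ) with hRdef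
  set L : ℝ := Real.log R with hLdef
  set Y : ℝ := R / (2 * L) with hYdef
  clear_value Y
  clear_value L
  clear_value R
  have hR100 : (100:ℝ) ≤ R := by rw [hRdef]; exact_mod_cast hN
  have hR0 : (0:ℝ) < R := by linarith
  have hR1 : (1:ℝ) ≤ R := by linarith
  have hL1 : 1 ≤ L := by
    rw [hLdef, Real.le_log_iff_exp_le hR0]
    linarith [Real.exp_one_lt_d9]
  have hL0 : 0 < L := by linarith
  have hY0 : 0 < Y := by rw [hYdef]; positivity
  have hYR : Y ≤ R := by
    rw [hYdef]
    exact div_le_self hR0.le (by linarith)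
  -- rpow quantities
  set sR : ℝ := Real.sqrt R with hsR
  clear_value sR
  have hhalf : R ^ ((1:ℝ)/2) = sR := by rw [hsR, Real.sqrt_eq_rpow]
  have hsR0 : 0 < sR := by rw [hsR]; exact Real.sqrt_pos.2 hR0
  have hsR10 : (10:ℝ) ≤ sR := by
    rw [hsR]
    calc (10:ℝ) = Real.sqrt (10^2) := by rw [Real.sqrt_sq]; norm_num
    _ ≤ Real.sqrt R := Real.sqrt_le_sqrt (by nlinarith)
  set p14 : ℝ := R ^ ((1:ℝ)/4) with hp14
  clear_value p14
  set p18 : ℝ := R ^ ((1:ℝ)/8) with hp18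
  clear_value p18
  set p38 : ℝ := R ^ ((3:ℝ)/8) with hp38
  clear_value p38
  set p34 : ℝ := R ^ ((3:ℝ)/4) with hp34
  clear_value p34
  set p58 : ℝ := R ^ ((5:ℝ)/8) with hp58
  clear_value p58
  set p78 : ℝ := R ^ ((7:ℝ)/8) with hp78
  clear_value p78
  have hp14_0 : 0 < p14 := hp14 ▸ Real.rpow_pos_of_pos hR0 _
  have hp18_0 : 0 < p18 := hp18 ▸ Real.rpow_pos_of_pos hR0 _
  have hp38_0 : 0 < p38 := hp38 ▸ Real.rpow_pos_of_pos hR0 _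
  have hp34_0 : 0 < p34 := hp34 ▸ Real.rpow_pos_of_pos hR0 _
  have hp58_0 : 0 < p58 := hp58 ▸ Real.rpow_pos_of_pos hR0 _
  have hp78_0 : 0 < p78 := hp78 ▸ Real.rpow_pos_of_pos hR0 _
  have hp14_1 : 1 ≤ p14 := hp14 ▸ Real.one_le_rpow hR1 (by norm_num)
  have hmul1 : sR * p38 = p78 := by
    rw [← hhalf, hp38, hp78, ← Real.rpow_add hR0]; norm_num
  have hmul2 : p58 * p38 = R := by
    rw [hp58, hp38, ← Real.rpow_add hR0]; norm_num
  have hmul3 : p58 * p14 = p78 := by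
    rw [hp58, hp14, hp78, ← Real.rpow_add hR0]; norm_num
  have hmul4 : p78 * p18 = R := by
    rw [hp78, hp18, ← Real.rpow_add hR0]; norm_num
  have hmul5 : sR * sR = R := by rw [hsR]; exact Real.mul_self_sqrt hR0.le
  have hmul6 : p18 * p18 = p14 := by
    rw [hp18, hp14, ← Real.rpow_add hR0]; norm_num
  have hp58_78 : p58 ≤ p78 := by
    rw [hp58, hp78]; exact Real.rpow_le_rpow_of_exponent_le hR1 (by norm_num)
  -- log bound
  have h2L : 2 * L ≤ p34 := by
    have hlog4 : Real.log p14 = (1/4) * L := by rw [hp14, hLdef, Real.log_rpow hR0]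
    have hlog_le := Real.log_le_sub_one_of_pos hp14_0
    have h8 : 8 * p14 ≤ p34 := by
      have hsplit : p34 = sR * p14 := by
        rw [hp34, ← hhalf, hp14, ← Real.rpow_add hR0]; norm_num
      rw [hsplit]
      linarith [mul_le_mul_of_nonneg_right hsR10 hp14_0.le]
    linarith
  -- M
  set M : ℕ := ⌈p34⌉₊ with hMdef
  have hp34_1 : (1:ℝ) ≤ p34 := by
    rw [hp34]; exact Real.one_le_rpow hR1 (by norm_num)
  have hM_lb : p34 ≤ (M:ℝ) := Nat.le_ceil _
  have hM_ub : (M:ℝ) ≤ 2 * p34 := by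
    have := Nat.ceil_lt_add_one (show (0:ℝ) ≤ p34 by linarith)
    rw [← hMdef] at this
    linarith
  have hM1 : 1 ≤ M := Nat.one_le_ceil_iff.2 (by linarith)
  have hMN : M ≤ N := by
    rw [hMdef]
    apply Nat.ceil_le.2
    have h1 : p34 ≤ R ^ (1:ℝ) := by
      rw [hp34]; exact Real.rpow_le_rpow_of_exponent_le hR1 (by norm_num)
    rw [Real.rpow_one] at h1
    rw [hRdef] at h1
    exact h1
  clear_value M
  set sM : ℝ := Real.sqrt M with hsM
  clear_value sM
  have hsM0 : 0 < sM := by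
    rw [hsM]; exact Real.sqrt_pos.2 (by exact_mod_cast hM1)
  have hsqrt_p34 : Real.sqrt p34 = p38 := by
    rw [hp38, hp34, Real.sqrt_eq_rpow, ← Real.rpow_mul hR0.le]; norm_num
  have hsM_lb : p38 ≤ sM := by
    rw [hsM, ← hsqrt_p34]
    exact Real.sqrt_le_sqrt hM_lb
  have hsM_ub : sM ≤ 2 * p38 := by
    have h2 : (M:ℝ) ≤ 4 * p34 := by linarith
    have h3 : Real.sqrt (4 * p34) = 2 * p38 := by
      rw [Real.sqrt_mul (by norm_num), hsqrt_p34,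
        show (4:ℝ) = 2^2 by norm_num, Real.sqrt_sq (by norm_num)]
    calc sM ≤ Real.sqrt (4 * p34) := by rw [hsM]; exact Real.sqrt_le_sqrt h2
    _ = 2 * p38 := h3
  -- Y bounds
  set sY : ℝ := Real.sqrt Y with hsY
  clear_value sY
  have hsY0 : 0 < sY := by rw [hsY]; exact Real.sqrt_pos.2 hY0
  have hsYsq : sY * sY = Y := by rw [hsY]; exact Real.mul_self_sqrt hY0.le
  have hsY_ub : sY ≤ sR := by rw [hsY, hsR]; exact Real.sqrt_le_sqrt hYR
  have hY_lb : p14 ≤ Y := by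
    have h1 : R / p34 ≤ Y := by
      rw [hYdef]
      exact div_le_div_of_nonneg_left hR0.le (by positivity) h2L
    have h2 : R ^ ((1:ℝ)) / R ^ ((3:ℝ)/4) = R ^ ((1:ℝ)/4) := by
      rw [← Real.rpow_sub hR0]; norm_num
    rw [Real.rpow_one] at h2
    rw [hp34] at h1
    rw [h2] at h1
    rw [hp14]
    exact h1
  have hsY_lb : p18 ≤ sY := by
    have h1 : Real.sqrt p14 = p18 := by
      rw [hp18, hp14, Real.sqrt_eq_rpow, ← Real.rpow_mul hR0.le]; norm_num
    rw [hsY, ← h1]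
    exact Real.sqrt_le_sqrt hY_lb
  -- δ
  set δ : ℝ := |η - (round η : ℝ)| with hδdef
  clear_value δ
  have hδ0 : 0 < δ := lt_trans (Real.rpow_pos_of_pos hR0 _) hη
  have hδinv : 1/δ ≤ sR := by
    have h1 : R ^ (-(1:ℝ)/2) = 1 / sR := by
      rw [show -(1:ℝ)/2 = -((1:ℝ)/2) by norm_num, Real.rpow_neg hR0.le, hhalf, one_div]
    have h2 : 1 / sR < δ := by rw [← h1]; exact hη
    calc 1/δ ≤ 1/(1/sR) := one_div_le_one_div_of_le (by positivity) h2.le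
    _ = sR := one_div_one_div _
  -- c and g
  set c : ℂ := (-(σ:ℂ) - 1/2) + (γ:ℂ) * Complex.I with hc
  have hcre : c.re = -σ - 1/2 := by rw [hc]; simp
  have hcim : c.im = γ := by rw [hc]; simp
  clear_value c
  have hγ0 : 0 ≤ |γ| := abs_nonneg γ
  have hcabs : ‖c‖ ≤ 1 + |γ| := by
    calc ‖c‖ ≤ |c.re| + |c.im| := Complex.norm_le_abs_re_add_abs_im c
    _ ≤ 1 + |γ| := by
        rw [hcre, hcim, abs_of_nonpos (by linarith)]
        linarith
  set g : ℝ → ℂ := fun t => Complex.exp (c * (Real.log t : ℂ) - ((t / Y : ℝ) : ℂ)) with hg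
  clear_value g
  have hgnorm : ∀ t : ℝ, 1 ≤ t → ‖g t‖ ≤ 1 / Real.sqrt t := by
    intro t ht
    rw [hg]
    exact gbound c Y σ hσ0 hcre hY0 t ht
  have hgdiff : ∀ n : ℕ, 1 ≤ n →
      ‖g ((n:ℝ)+1) - g (n:ℝ)‖ ≤
        (1+|γ|) * (1/((n:ℝ) * Real.sqrt n)) + (1/Y) * (1/Real.sqrt n) := by
    intro n hn
    rw [hg]
    exact gdiff c Y σ γ hσ0 (by linarith) hcre hcim hY0 n hn
  -- per-term identity
  have hterm : ∀ n : ℕ, 1 ≤ n →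
      (n : ℂ) ^ ((1 - (σ:ℂ) + (γ:ℂ) * Complex.I) - 1) *
        ((((n:ℝ) / Y) ^ (-(1:ℝ) / 2) * Real.exp (-((n:ℝ) / Y)) : ℝ) : ℂ) *
        e (η * n) = (sY:ℂ) * g (n:ℝ) * e (η * n) := by
    intro n hn
    have hn0 : (0:ℝ) < (n:ℝ) := by exact_mod_cast Nat.pos_of_ne_zero (by omega)
    have hnne : ((n:ℕ):ℂ) ≠ 0 := Nat.cast_ne_zero.2 (by omega)
    have hAB : (n : ℂ) ^ ((1 - (σ:ℂ) + (γ:ℂ) * Complex.I) - 1) *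
        ((((n:ℝ) / Y) ^ (-(1:ℝ) / 2) * Real.exp (-((n:ℝ) / Y)) : ℝ) : ℂ)
        = (sY:ℂ) * g (n:ℝ) := by
      rw [Complex.cpow_def_of_ne_zero hnne, ← Complex.natCast_log]
      rw [Real.rpow_def_of_pos (by positivity : (0:ℝ) < (n:ℝ)/Y)]
      rw [Real.log_div (ne_of_gt hn0) (ne_of_gt hY0)]
      rw [← Real.exp_add, Complex.ofReal_exp]
      rw [hg, hc]
      rw [hsY, Real.sqrt_eq_rpow, Real.rpow_def_of_pos hY0, Complex.ofReal_exp]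
      rw [← Complex.exp_add, ← Complex.exp_add]
      congr 1
      push_cast
      ring
    rw [hAB]
  -- split the sum
  have hgoal_eq : (∑ n ∈ Finset.Icc 1 N,
      (n : ℂ) ^ ((1 - (σ:ℂ) + (γ:ℂ) * Complex.I) - 1) *
        ((((n:ℝ) / Y) ^ (-(1:ℝ) / 2) * Real.exp (-((n:ℝ) / Y)) : ℝ) : ℂ) *
        e (η * n))
      = (∑ n ∈ Finset.Ico 1 (M+1), (sY:ℂ) * g (n:ℝ) * e (η * n))
        + (∑ n ∈ Finset.Ico (M+1) (N+1), (sY:ℂ) * g (n:ℝ) * e (η * n)) := by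
    rw [← Finset.Ico_add_one_right_eq_Icc,
      ← Finset.sum_Ico_consecutive _ (show 1 ≤ M+1 by omega) (show M+1 ≤ N+1 by omega)]
    congr 1
    · exact Finset.sum_congr rfl (fun n hn => hterm n (Finset.mem_Ico.1 hn).1)
    · exact Finset.sum_congr rfl (fun n hn => hterm n
        (by have := (Finset.mem_Ico.1 hn).1; omega))
  rw [hgoal_eq]
  -- norm of a single term
  have hnorm_term : ∀ n : ℕ, 1 ≤ n → ‖(sY:ℂ) * g (n:ℝ) * e (η * n)‖ ≤ sY * (1/Real.sqrt n) := by
    intro n hn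
    have hn1 : (1:ℝ) ≤ (n:ℝ) := by exact_mod_cast hn
    rw [norm_mul, norm_mul, enorm, mul_one, Complex.norm_real, Real.norm_eq_abs,
      abs_of_pos hsY0]
    exact mul_le_mul_of_nonneg_left (hgnorm (n:ℝ) hn1) hsY0.le
  -- S1 bound
  have hS1 : ‖∑ n ∈ Finset.Ico 1 (M+1), (sY:ℂ) * g (n:ℝ) * e (η * n)‖ ≤ sY * (2 * sM) := by
    calc ‖∑ n ∈ Finset.Ico 1 (M+1), (sY:ℂ) * g (n:ℝ) * e (η * n)‖
        ≤ ∑ n ∈ Finset.Ico 1 (M+1), ‖(sY:ℂ) * g (n:ℝ) * e (η * n)‖ := norm_sum_le _ _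
    _ ≤ ∑ n ∈ Finset.Ico 1 (M+1), sY * (1/Real.sqrt n) := by
        apply Finset.sum_le_sum
        intro n hn
        exact hnorm_term n (Finset.mem_Ico.1 hn).1
    _ = sY * ∑ n ∈ Finset.Icc 1 M, (1:ℝ)/Real.sqrt n := by
        rw [Finset.Ico_add_one_right_eq_Icc, Finset.mul_sum]
    _ ≤ sY * (2 * Real.sqrt M) := by
        apply mul_le_mul_of_nonneg_left (tele1 M) hsY0.le
    _ = sY * (2 * sM) := by rw [hsM]
  -- S2 : Abel summation
  set K : ℕ := N - M with hKdef
  set f : ℕ → ℂ := fun i => (sY:ℂ) * g (((M+1+i : ℕ)):ℝ) with hf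
  set A : ℕ → ℂ := fun i => e (η * ((M+1+i : ℕ):ℝ)) with hA
  have hS2sum : (∑ n ∈ Finset.Ico (M+1) (N+1), (sY:ℂ) * g (n:ℝ) * e (η * n))
      = ∑ i ∈ Finset.range K, f i • A i := by
    rw [Finset.sum_Ico_eq_sum_range]
    have : N + 1 - (M+1) = K := by omega
    rw [this]
    exact Finset.sum_congr rfl (fun i _ => by rw [hf, hA, smul_eq_mul])
  have hG : ∀ k : ℕ, ‖∑ j ∈ Finset.range k, A j‖ ≤ 1/(2*δ) := by
    intro k
    have hb := geom_bound η (by rw [← hδdef]; exact hδ0) (M+1) k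
    rw [hδdef]
    calc ‖∑ j ∈ Finset.range k, A j‖
        = ‖∑ j ∈ Finset.range k, e (η * (((M+1:ℕ):ℝ) + (j:ℝ)))‖ := by
          congr 1
          exact Finset.sum_congr rfl (fun j _ => by rw [hA]; norm_num)
    _ ≤ 1/(2*|η - (round η : ℝ)|) := hb
  have hfn : ∀ i : ℕ, ‖f i‖ ≤ sY * (1/sM) := by
    intro i
    simp only [hf]
    have h1 : (1:ℝ) ≤ ((M+1+i : ℕ):ℝ) := by exact_mod_cast (show (1:ℕ) ≤ M+1+i by omega)
    rw [norm_mul, Complex.norm_real, Real.norm_eq_abs, abs_of_pos hsY0]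
    have h2 : ‖g (((M+1+i:ℕ)):ℝ)‖ ≤ 1/Real.sqrt ((M+1+i:ℕ):ℝ) := hgnorm _ h1
    have h3 : (1:ℝ)/Real.sqrt ((M+1+i:ℕ):ℝ) ≤ 1/sM := by
      rw [hsM]
      apply one_div_le_one_div_of_le (Real.sqrt_pos.2 (by exact_mod_cast hM1))
      apply Real.sqrt_le_sqrt
      exact_mod_cast (show M ≤ M+1+i by omega)
    calc sY * ‖g (((M+1+i:ℕ)):ℝ)‖
        ≤ sY * (1/Real.sqrt ((M+1+i:ℕ):ℝ)) := mul_le_mul_of_nonneg_left h2 hsY0.le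
    _ ≤ sY * (1/sM) := mul_le_mul_of_nonneg_left h3 hsY0.le
  set B : ℕ → ℝ := fun n => (1+|γ|) * (1/((n:ℝ) * Real.sqrt n)) + (1/Y) * (1/Real.sqrt n)
    with hB
  have hB0 : ∀ n : ℕ, 1 ≤ n → 0 ≤ B n := by
    intro n hn
    have : (0:ℝ) < (n:ℝ) := by exact_mod_cast Nat.pos_of_ne_zero (by omega)
    rw [hB]
    positivity
  have hfd : ∀ i : ℕ, ‖f (i+1) - f i‖ ≤ sY * B (M+1+i) := by
    intro i
    simp only [hf]
    have hfac : (sY:ℂ) * g (((M+1+(i+1) : ℕ)):ℝ) - (sY:ℂ) * g (((M+1+i : ℕ)):ℝ)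
        = (sY:ℂ) * (g ((((M+1+i : ℕ)):ℝ) + 1) - g (((M+1+i : ℕ)):ℝ)) := by
      rw [mul_sub]
      congr 2
      push_cast
      ring
    rw [hfac, norm_mul, Complex.norm_real, Real.norm_eq_abs, abs_of_pos hsY0]
    exact mul_le_mul_of_nonneg_left (hgdiff (M+1+i) (by omega)) hsY0.le
  have hBsum : ∑ i ∈ Finset.range (K-1), B (M+1+i)
      ≤ (1+|γ|) * (2/sM) + (1/Y) * (2*sR) := by
    have h1 : ∑ i ∈ Finset.range (K-1), B (M+1+i)
        = ∑ n ∈ Finset.Ico (M+1) (M+1+(K-1)), B n := by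
      have hKM : M+1+(K-1) - (M+1) = K-1 := by omega
      rw [Finset.sum_Ico_eq_sum_range, hKM]
    have h2 : Finset.Ico (M+1) (M+1+(K-1)) ⊆ Finset.Icc (M+1) N := by
      rw [← Finset.Ico_add_one_right_eq_Icc]
      apply Finset.Ico_subset_Ico le_rfl
      omega
    have h3 : ∑ n ∈ Finset.Ico (M+1) (M+1+(K-1)), B n ≤ ∑ n ∈ Finset.Icc (M+1) N, B n := by
      apply Finset.sum_le_sum_of_subset_of_nonneg h2
      intro n hn _
      exact hB0 n (by have := (Finset.mem_Icc.1 hn).1; omega)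
    have h4 : ∑ n ∈ Finset.Icc (M+1) N, B n
        = (1+|γ|) * (∑ n ∈ Finset.Icc (M+1) N, 1/((n:ℝ) * Real.sqrt n))
          + (1/Y) * (∑ n ∈ Finset.Icc (M+1) N, 1/Real.sqrt n) := by
      rw [hB, Finset.sum_add_distrib, Finset.mul_sum, Finset.mul_sum]
    have h5 : ∑ n ∈ Finset.Icc (M+1) N, (1:ℝ)/((n:ℝ) * Real.sqrt n) ≤ 2/sM := by
      rw [hsM]
      exact tele2 M hM1 N hMN
    have h6 : ∑ n ∈ Finset.Icc (M+1) N, (1:ℝ)/Real.sqrt n ≤ 2*sR := by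
      have hsub : Finset.Icc (M+1) N ⊆ Finset.Icc 1 N := by
        apply Finset.Icc_subset_Icc (by omega) le_rfl
      calc ∑ n ∈ Finset.Icc (M+1) N, (1:ℝ)/Real.sqrt n
          ≤ ∑ n ∈ Finset.Icc 1 N, (1:ℝ)/Real.sqrt n := by
            apply Finset.sum_le_sum_of_subset_of_nonneg hsub
            intro n hn _
            positivity
      _ ≤ 2 * Real.sqrt N := tele1 N
      _ = 2 * sR := by rw [hsR, hRdef]
    have h7 : (0:ℝ) ≤ 1 + |γ| := by positivity
    have h8 : (0:ℝ) ≤ 1 / Y := by positivity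
    calc ∑ i ∈ Finset.range (K-1), B (M+1+i)
        ≤ ∑ n ∈ Finset.Icc (M+1) N, B n := h1 ▸ h3
    _ = (1+|γ|) * (∑ n ∈ Finset.Icc (M+1) N, 1/((n:ℝ) * Real.sqrt n))
          + (1/Y) * (∑ n ∈ Finset.Icc (M+1) N, 1/Real.sqrt n) := h4
    _ ≤ (1+|γ|) * (2/sM) + (1/Y) * (2*sR) := by
        have := mul_le_mul_of_nonneg_left h5 h7
        have := mul_le_mul_of_nonneg_left h6 h8
        linarith
  -- Abel summation estimate
  have hd0 : (0:ℝ) ≤ 1/(2*δ) := by positivity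
  have hS2 : ‖∑ i ∈ Finset.range K, f i • A i‖
      ≤ sY * (1/sM) * (1/(2*δ)) + (sY * ((1+|γ|) * (2/sM) + (1/Y) * (2*sR))) * (1/(2*δ)) := by
    rw [Finset.sum_range_by_parts f A K]
    have hterm1 : ‖f (K-1) • ∑ j ∈ Finset.range K, A j‖ ≤ sY * (1/sM) * (1/(2*δ)) := by
      rw [smul_eq_mul, norm_mul]
      exact mul_le_mul (hfn (K-1)) (hG K) (norm_nonneg _)
        (by positivity)
    have hterm2 : ‖∑ i ∈ Finset.range (K-1), (f (i+1) - f i) • ∑ j ∈ Finset.range (i+1), A j‖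
        ≤ (sY * ((1+|γ|) * (2/sM) + (1/Y) * (2*sR))) * (1/(2*δ)) := by
      calc ‖∑ i ∈ Finset.range (K-1), (f (i+1) - f i) • ∑ j ∈ Finset.range (i+1), A j‖
          ≤ ∑ i ∈ Finset.range (K-1), ‖(f (i+1) - f i) • ∑ j ∈ Finset.range (i+1), A j‖ :=
            norm_sum_le _ _
      _ ≤ ∑ i ∈ Finset.range (K-1), sY * B (M+1+i) * (1/(2*δ)) := by
          apply Finset.sum_le_sum
          intro i _
          rw [smul_eq_mul, norm_mul]
          apply mul_le_mul (hfd i) (hG (i+1)) (norm_nonneg _)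
          have := hB0 (M+1+i) (by omega)
          positivity
      _ = (∑ i ∈ Finset.range (K-1), B (M+1+i)) * (sY * (1/(2*δ))) := by
          rw [Finset.sum_mul]
          apply Finset.sum_congr rfl
          intro i _
          ring
      _ ≤ ((1+|γ|) * (2/sM) + (1/Y) * (2*sR)) * (sY * (1/(2*δ))) := by
          apply mul_le_mul_of_nonneg_right hBsum
          positivity
      _ = (sY * ((1+|γ|) * (2/sM) + (1/Y) * (2*sR))) * (1/(2*δ)) := by ring
    calc ‖f (K - 1) • ∑ i ∈ Finset.range K, A i -
          ∑ i ∈ Finset.range (K - 1), (f (i + 1) - f i) • ∑ j ∈ Finset.range (i + 1), A j‖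
        ≤ ‖f (K-1) • ∑ j ∈ Finset.range K, A j‖ +
          ‖∑ i ∈ Finset.range (K-1), (f (i+1) - f i) • ∑ j ∈ Finset.range (i+1), A j‖ :=
          norm_sub_le _ _
    _ ≤ sY * (1/sM) * (1/(2*δ)) + (sY * ((1+|γ|) * (2/sM) + (1/Y) * (2*sR))) * (1/(2*δ)) := by
        linarith [hterm1, hterm2]
  -- final numeric assembly
  have hd : 1/(2*δ) ≤ sR/2 := by
    have h : 1/(2*δ) = (1/δ)/2 := by ring
    rw [h]
    linarith [hδinv]
  have hp58eq : p58 = R / p38 := by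
    field_simp
    linarith [hmul2]
  have hp78eq : p78 = R / p18 := by
    field_simp
    linarith [hmul4]
  have hE1 : sY * (2 * sM) ≤ 4 * p78 := by
    calc sY * (2 * sM) ≤ sR * (2 * (2*p38)) := by
          apply mul_le_mul hsY_ub (by linarith) (by positivity) (by positivity)
    _ = 4 * (sR * p38) := by ring
    _ = 4 * p78 := by rw [hmul1]
  have hE2 : sY * (1/sM) * (1/(2*δ)) ≤ p78 / 2 := by
    have h1 : sY * (1/sM) ≤ sR * (1/p38) := by
      apply mul_le_mul hsY_ub (one_div_le_one_div_of_le hp38_0 hsM_lb)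
        (by positivity) (by positivity)
    have h2 : sY * (1/sM) * (1/(2*δ)) ≤ (sR * (1/p38)) * (sR/2) :=
      mul_le_mul h1 hd hd0 (by positivity)
    have h3 : (sR * (1/p38)) * (sR/2) = p58/2 := by
      have h4 : (sR * (1/p38)) * (sR/2) = (sR*sR) / p38 / 2 := by ring
      rw [h4, hmul5, ← hp58eq]
    linarith [hp58_78]
  have hE3 : (sY * ((1+|γ|) * (2/sM))) * (1/(2*δ)) ≤ 2 * p78 := by
    have hg2 : (1+|γ|) ≤ 2*p14 := by linarith
    have hsM2 : 2/sM ≤ 2/p38 := by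
      apply div_le_div_of_nonneg_left (by norm_num) hp38_0 hsM_lb
    have h1 : (1+|γ|) * (2/sM) ≤ (2*p14) * (2/p38) := by
      apply mul_le_mul hg2 hsM2 (by positivity) (by positivity)
    have h2 : sY * ((1+|γ|) * (2/sM)) ≤ sR * ((2*p14) * (2/p38)) := by
      apply mul_le_mul hsY_ub h1 (by positivity) (by positivity)
    have h3 : (sY * ((1+|γ|) * (2/sM))) * (1/(2*δ)) ≤ (sR * ((2*p14) * (2/p38))) * (sR/2) :=
      mul_le_mul h2 hd hd0 (by positivity)
    have h4 : (sR * ((2*p14) * (2/p38))) * (sR/2) = 2 * p78 := by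
      have h5 : (sR * ((2*p14) * (2/p38))) * (sR/2) = 2 * (((sR*sR) / p38) * p14) := by
        ring
      rw [h5, hmul5, ← hp58eq, hmul3]
    linarith
  have hE4 : (sY * ((1/Y) * (2*sR))) * (1/(2*δ)) ≤ p78 := by
    have h0 : sY * (1/Y) = 1/sY := by
      rw [← hsYsq]
      field_simp
    have h1 : sY * ((1/Y) * (2*sR)) = (1/sY) * (2*sR) := by
      rw [← h0]; ring
    have h2 : (1/sY) * (2*sR) ≤ (1/p18) * (2*sR) := by
      apply mul_le_mul_of_nonneg_right (one_div_le_one_div_of_le hp18_0 hsY_lb)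
        (by positivity)
    have h3 : (sY * ((1/Y) * (2*sR))) * (1/(2*δ)) ≤ ((1/p18) * (2*sR)) * (sR/2) := by
      rw [h1]
      exact mul_le_mul h2 hd hd0 (by positivity)
    have h4 : ((1/p18) * (2*sR)) * (sR/2) = p78 := by
      have h5 : ((1/p18) * (2*sR)) * (sR/2) = (sR*sR) / p18 := by ring
      rw [h5, hmul5, ← hp78eq]
    linarith
  have hsplit3 : (sY * ((1+|γ|) * (2/sM) + (1/Y) * (2*sR))) * (1/(2*δ))
      = (sY * ((1+|γ|) * (2/sM))) * (1/(2*δ)) + (sY * ((1/Y) * (2*sR))) * (1/(2*δ)) := by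
    ring
  have hp78_fin : p78 ≤ R ^ (1 - (1:ℝ)/12) := by
    rw [hp78]
    exact Real.rpow_le_rpow_of_exponent_le hR1 (by norm_num)
  calc ‖(∑ n ∈ Finset.Ico 1 (M+1), (sY:ℂ) * g (n:ℝ) * e (η * n))
        + (∑ n ∈ Finset.Ico (M+1) (N+1), (sY:ℂ) * g (n:ℝ) * e (η * n))‖
      ≤ ‖∑ n ∈ Finset.Ico 1 (M+1), (sY:ℂ) * g (n:ℝ) * e (η * n)‖
        + ‖∑ n ∈ Finset.Ico (M+1) (N+1), (sY:ℂ) * g (n:ℝ) * e (η * n)‖ := norm_add_le _ _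
  _ ≤ sY * (2 * sM) + (sY * (1/sM) * (1/(2*δ))
        + (sY * ((1+|γ|) * (2/sM) + (1/Y) * (2*sR))) * (1/(2*δ))) := by
      have := hS2sum ▸ hS2
      linarith [hS1, this]
  _ ≤ 10 * R ^ (1 - (1:ℝ)/12) := by
      rw [hsplit3] at *
      linarith [hE1, hE2, hE3, hE4, hp78_fin]
end

section
/- For all real σ, γ, θ with 0 ≤ σ ≤ 1/4: |Γ(1/2 - σ + iγ) · (1 + 2πiθ)^{-(1/2 - σ + iγ)}| ≤ 10 · (1 + θ²)^{σ/2} · Re(Γ(1/2) · (1 + 2πiθ)^{-1/2}). -/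
set_option maxHeartbeats 1000000

open Real Complex MeasureTheory intervalIntegral


lemma gamma_half_add_ge_one {σ : ℝ} (h0 : 0 ≤ σ) (h1 : σ ≤ 1/4) :
    1 ≤ Real.Gamma (1/2 + σ) := by
  have hx : (0:ℝ) < 1/2 + σ := by linarith
  have hrec : Real.Gamma (1/2 + σ + 1) = (1/2 + σ) * Real.Gamma (1/2 + σ) :=
    Real.Gamma_add_one hx.ne'
  set a : ℝ := 3/2 + σ with ha
  have h3a : (0:ℝ) < 3 - a := by rw [ha]; linarith
  have haI : a ∈ Set.Ioi (0:ℝ) := by rw [Set.mem_Ioi, ha]; linarith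
  have h3I : (3:ℝ) ∈ Set.Ioi (0:ℝ) := by norm_num
  have hl : (0:ℝ) ≤ 1/(3-a) := by positivity
  have hm : (0:ℝ) ≤ (2-a)/(3-a) := by
    apply div_nonneg _ h3a.le
    rw [ha]; linarith
  have hsum : 1/(3-a) + (2-a)/(3-a) = 1 := by
    rw [← add_div, div_eq_one_iff_eq h3a.ne']; ring
  have hconv := Real.convexOn_Gamma.2 haI h3I hl hm hsum
  have hpt : (1/(3-a)) • a + ((2-a)/(3-a)) • (3:ℝ) = 2 := by
    simp only [smul_eq_mul]
    field_simp
    ring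
  rw [hpt] at hconv
  have hΓ2 : Real.Gamma 2 = 1 := Real.Gamma_two
  have hΓ3 : Real.Gamma 3 = 2 := by
    have h3 : (3:ℝ) = 2 + 1 := by norm_num
    rw [h3, Real.Gamma_add_one (by norm_num), hΓ2]; norm_num
  rw [hΓ2, hΓ3] at hconv
  simp only [smul_eq_mul] at hconv
  set G : ℝ := Real.Gamma a with hG
  have he : 1/(3-a) * G + (2-a)/(3-a) * 2 = (G + (2-a)*2)/(3-a) := by
    field_simp
  rw [he] at hconv
  have h2 := (le_div_iff₀ h3a).mp hconv
  have hga : a - 1 ≤ G := by linarith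
  have haeq : a = 1/2 + σ + 1 := by rw [ha]; ring
  rw [hG, haeq, hrec] at hga
  have h3' : 1/2 + σ ≤ (1/2 + σ) * Real.Gamma (1/2 + σ) := by linarith
  exact le_of_mul_le_mul_left (by linarith) hx


lemma abs_betaIntegral_le {u v : ℂ} (hu : 0 < u.re) (hv : 0 < v.re) :
    ‖Complex.betaIntegral u v‖ ≤
      (Complex.betaIntegral (u.re : ℂ) (v.re : ℂ)).re := by
  set x := u.re with hx
  set y := v.re with hy
  set g : ℝ → ℝ := fun t => t ^ (x - 1) * (1 - t) ^ (y - 1) with hg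
  have hgnn : ∀ t : ℝ, t ∈ Set.Icc (0:ℝ) 1 → 0 ≤ g t := by
    intro t ht
    have h1 : (0:ℝ) ≤ t := ht.1
    have h2 : (0:ℝ) ≤ 1 - t := by linarith [ht.2]
    exact mul_nonneg (Real.rpow_nonneg h1 _) (Real.rpow_nonneg h2 _)
  have e1 : ((x - 1 : ℝ) : ℂ) = (x:ℂ) - 1 := by push_cast; ring
  have e2 : ((y - 1 : ℝ) : ℂ) = (y:ℂ) - 1 := by push_cast; ring
  have hcoe : ∀ t ∈ Set.uIcc (0:ℝ) 1,
      (t : ℂ) ^ ((x:ℂ) - 1) * (1 - (t:ℂ)) ^ ((y:ℂ) - 1) = ((g t : ℝ) : ℂ) := by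
    intro t ht
    rw [Set.uIcc_of_le (by norm_num : (0:ℝ) ≤ 1)] at ht
    have ht0 : (0:ℝ) ≤ t := ht.1
    have ht1 : (0:ℝ) ≤ 1 - t := by linarith [ht.2]
    have f1 : ((t ^ (x-1) : ℝ) : ℂ) = (t:ℂ) ^ ((x:ℂ)-1) := by
      rw [Complex.ofReal_cpow ht0, e1]
    have f2 : (((1-t) ^ (y-1) : ℝ) : ℂ) = (1-(t:ℂ)) ^ ((y:ℂ)-1) := by
      rw [Complex.ofReal_cpow ht1, e2]; norm_cast
    rw [hg]
    simp only []
    rw [Complex.ofReal_mul, f1, f2]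
  have hbr : Complex.betaIntegral (x:ℂ) (y:ℂ) = ((∫ t in (0:ℝ)..1, g t : ℝ) : ℂ) := by
    rw [Complex.betaIntegral, intervalIntegral.integral_congr hcoe]
    exact intervalIntegral.integral_ofReal
  have hxc : 0 < ((x:ℂ)).re := by simpa using hu
  have hyc : 0 < ((y:ℂ)).re := by simpa using hv
  have h := Complex.betaIntegral_convergent hxc hyc
  have hgint : IntervalIntegrable g volume 0 1 := by
    refine h.norm.congr ?_
    rw [Set.uIoc_of_le (by norm_num : (0:ℝ) ≤ 1)]
    intro t ht
    dsimp only
    have htm : t ∈ Set.Icc (0:ℝ) 1 := Set.Ioc_subset_Icc_self ht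
    rw [hcoe t (by rw [Set.uIcc_of_le (by norm_num : (0:ℝ) ≤ 1)]; exact htm)]
    rw [Complex.norm_real, Real.norm_eq_abs, _root_.abs_of_nonneg (hgnn t htm)]
  have hne : ∀ᵐ (t:ℝ) ∂volume, t ≠ 1 := by
    refine MeasureTheory.ae_iff.mpr ?_
    simp only [ne_eq, not_not, Set.setOf_eq_eq_singleton]
    exact Real.volume_singleton
  have hb : ∀ᵐ (t : ℝ) ∂(volume.restrict (Set.uIoc (0:ℝ) 1)),
      ‖(t : ℂ) ^ (u - 1) * (1 - (t:ℂ)) ^ (v - 1)‖ ≤ g t := by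
    rw [Set.uIoc_of_le (by norm_num : (0:ℝ) ≤ 1)]
    filter_upwards [ae_restrict_mem measurableSet_Ioc, ae_restrict_of_ae hne] with t ht ht1
    have ht0 : (0:ℝ) < t := ht.1
    have h1t : (0:ℝ) < 1 - t := by
      rcases lt_or_eq_of_le ht.2 with h' | h'
      · linarith
      · exact absurd h' ht1
    rw [norm_mul,
      Complex.norm_cpow_eq_rpow_re_of_pos ht0]
    have : (1 - (t:ℂ)) = ((1 - t : ℝ) : ℂ) := by push_cast; ring
    rw [this, Complex.norm_cpow_eq_rpow_re_of_pos h1t]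
    simp only [Complex.sub_re, Complex.one_re, hg]
    rw [hx, hy]
  have hnorm := intervalIntegral.norm_integral_le_abs_of_norm_le hb hgint
  have habs : |∫ t in (0:ℝ)..1, g t| = ∫ t in (0:ℝ)..1, g t :=
    _root_.abs_of_nonneg (intervalIntegral.integral_nonneg (by norm_num)
      (fun t ht => hgnn t ht))
  rw [Complex.betaIntegral]
  refine hnorm.trans_eq ?_
  rw [habs, hbr, Complex.ofReal_re]

lemma ratio_bound {σ : ℝ} (h0 : 0 ≤ σ) (h1 : σ ≤ 1/4) :
    Real.Gamma (1/2 - σ) ≤ Real.sqrt 2 * π * Real.Gamma (1/2 + σ) := by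
  have hcos : Real.sqrt 2 / 2 ≤ Real.cos (π * σ) := by
    rw [← Real.cos_pi_div_four]
    apply Real.cos_le_cos_of_nonneg_of_le_pi (by positivity)
      (by linarith [Real.pi_pos]) (by nlinarith [Real.pi_pos])
  have hG : 1 ≤ Real.Gamma (1/2 + σ) := gamma_half_add_ge_one h0 h1
  have hrefl := Real.Gamma_mul_Gamma_one_sub (1/2 + σ)
  have h1s : (1 : ℝ) - (1/2 + σ) = 1/2 - σ := by ring
  have hsin : Real.sin (π * (1/2 + σ)) = Real.cos (π * σ) := by
    rw [show π * (1/2 + σ) = π/2 - (-(π*σ)) by ring, Real.sin_pi_div_two_sub, Real.cos_neg]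
  rw [h1s, hsin] at hrefl
  have hcpos : 0 < Real.cos (π * σ) := lt_of_lt_of_le (by positivity) hcos
  have hGpos : 0 < Real.Gamma (1/2 + σ) := by linarith
  have hGspos : 0 < Real.Gamma (1/2 - σ) := Real.Gamma_pos_of_pos (by linarith)
  have key : Real.Gamma (1/2 + σ) * Real.Gamma (1/2 - σ) * Real.cos (π * σ) = π := by
    rw [hrefl]; field_simp
  have h3 : Real.sqrt 2 / 2 * 1 ≤ Real.cos (π * σ) * Real.Gamma (1/2 + σ) :=
    mul_le_mul hcos hG (by norm_num) hcpos.le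
  have hs2 : Real.sqrt 2 * Real.sqrt 2 = 2 := Real.mul_self_sqrt (by norm_num)
  have h2 : (0:ℝ) < Real.sqrt 2 := by positivity
  nlinarith [mul_le_mul_of_nonneg_left h3 hGspos.le, key, hG, Real.pi_pos,
    mul_le_mul_of_nonneg_left hG (mul_nonneg h2.le Real.pi_pos.le)]

lemma gamma_decay {σ γ : ℝ} (h0 : 0 ≤ σ) (h1 : σ ≤ 1/4) :
    ‖Complex.Gamma (1/2 - (σ:ℂ) + (γ:ℂ) * I)‖ ≤
      π * (2:ℝ) ^ ((3:ℝ)/4) * Real.exp (-(π * |γ|) / 2) := by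
  set u : ℂ := 1/2 - (σ:ℂ) + (γ:ℂ) * I with hu
  have hure : u.re = 1/2 - σ := by simp [hu]
  have huim : u.im = γ := by simp [hu]
  set A := ‖Complex.Gamma u‖ with hA
  set B := ‖Complex.Gamma (1 - u)‖ with hB
  have hApos : 0 ≤ A := norm_nonneg _
  have hBpos : 0 ≤ B := norm_nonneg _
  have hconj : (1 : ℂ) - u = (starRingEnd ℂ) (((1/2 + σ : ℝ) : ℂ) + (γ:ℂ) * I) := by
    rw [hu, Complex.ext_iff]
    constructor <;> simp <;> ring
  have hBalt : B = ‖Complex.Gamma (((1/2 + σ : ℝ):ℂ) + (γ:ℂ) * I)‖ := by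
    rw [hB, hconj, Complex.Gamma_conj, Complex.norm_conj]
  have hGp : 0 < Real.Gamma (1/2 + σ) := Real.Gamma_pos_of_pos (by linarith)
  have hGm : 0 < Real.Gamma (1/2 - σ) := Real.Gamma_pos_of_pos (by linarith)
  have stepA : A ≤ Real.Gamma (1/2 - σ) / Real.Gamma (1/2 + σ) * B := by
    rcases eq_or_lt_of_le h0 with hσ0 | hσ0
    · have hcu : (1:ℂ) - u = (starRingEnd ℂ) u := by
        rw [hu, Complex.ext_iff]
        constructor <;> simp [← hσ0] <;> ring
      have hBA : B = A := by rw [hB, hcu, Complex.Gamma_conj, Complex.norm_conj, ← hA]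
      rw [hBA, ← hσ0]
      rw [show (1:ℝ)/2 - 0 = 1/2 by norm_num, show (1:ℝ)/2 + 0 = 1/2 by norm_num,
        div_self (Real.Gamma_pos_of_pos (by norm_num : (0:ℝ) < 1/2)).ne', one_mul]
    · have h2σ : 0 < ((2*σ : ℝ):ℂ).re := by simpa using by linarith
      have hur : 0 < u.re := by rw [hure]; linarith
      have hbeta := Complex.Gamma_mul_Gamma_eq_betaIntegral hur h2σ
      have hsum : u + ((2*σ:ℝ):ℂ) = ((1/2 + σ : ℝ):ℂ) + (γ:ℂ) * I := by
        rw [hu, Complex.ext_iff]; constructor <;> simp <;> ring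
      rw [hsum] at hbeta
      have hG2σpos : 0 < Real.Gamma (2*σ) := Real.Gamma_pos_of_pos (by linarith)
      have habs := congrArg (‖·‖) hbeta
      rw [norm_mul, norm_mul, Complex.Gamma_ofReal, Complex.norm_real, Real.norm_eq_abs,
        _root_.abs_of_nonneg hG2σpos.le] at habs
      have hble := abs_betaIntegral_le hur h2σ
      have hre2 : (((2*σ:ℝ):ℂ)).re = 2*σ := by simp
      rw [hure, hre2] at hble
      have hmσ : (0:ℝ) < 1/2 - σ := by linarith
      have hbr := Complex.Gamma_mul_Gamma_eq_betaIntegral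
        (s := ((1/2 - σ:ℝ):ℂ)) (t := ((2*σ:ℝ):ℂ)) (by simpa using hmσ) h2σ
      have h12 : ((1/2 - σ:ℝ):ℂ) + ((2*σ:ℝ):ℂ) = ((1/2 + σ:ℝ):ℂ) := by push_cast; ring
      rw [h12, Complex.Gamma_ofReal, Complex.Gamma_ofReal, Complex.Gamma_ofReal] at hbr
      have hval : Complex.betaIntegral ((1/2 - σ:ℝ):ℂ) ((2*σ:ℝ):ℂ) =
          (((Real.Gamma (1/2-σ) * Real.Gamma (2*σ) / Real.Gamma (1/2+σ)) : ℝ) : ℂ) := by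
        have hGpne : ((Real.Gamma (1/2+σ) : ℝ) : ℂ) ≠ 0 := by
          exact_mod_cast hGp.ne'
        rw [eq_comm, Complex.ofReal_div, Complex.ofReal_mul, div_eq_iff hGpne, hbr]
        ring
      rw [hval, Complex.ofReal_re] at hble
      -- combine
      rw [← mul_le_mul_iff_of_pos_right hG2σpos]
      calc A * Real.Gamma (2*σ)
          = B * ‖Complex.betaIntegral u ((2*σ:ℝ):ℂ)‖ := by
            rw [hBalt]; exact habs
        _ ≤ B * (Real.Gamma (1/2-σ) * Real.Gamma (2*σ) / Real.Gamma (1/2+σ)) :=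
            mul_le_mul_of_nonneg_left hble hBpos
        _ = Real.Gamma (1/2 - σ) / Real.Gamma (1/2 + σ) * B * Real.Gamma (2*σ) := by
            ring
  -- reflection formula
  have hrefl := Complex.Gamma_mul_Gamma_one_sub u
  have habsr := congrArg (‖·‖) hrefl
  rw [norm_mul, norm_div, Complex.norm_real, Real.norm_eq_abs, _root_.abs_of_nonneg Real.pi_pos.le] at habsr
  -- sin computation
  have hπu : ((π:ℝ):ℂ) * u = ((π * (1/2 - σ) : ℝ):ℂ) + ((π * γ:ℝ):ℂ) * I := by
    rw [hu]; push_cast; ring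
  have hsin : Complex.sin (((π:ℝ):ℂ) * u) =
      ((Real.cos (π*σ) * Real.cosh (π*γ) : ℝ):ℂ) +
        ((Real.sin (π*σ) * Real.sinh (π*γ) : ℝ):ℂ) * I := by
    rw [hπu, Complex.sin_add_mul_I]
    rw [← Complex.ofReal_sin, ← Complex.ofReal_cos, ← Complex.ofReal_cosh, ← Complex.ofReal_sinh]
    have e1 : Real.sin (π * (1/2 - σ)) = Real.cos (π * σ) := by
      rw [show π * (1/2 - σ) = π/2 - π*σ by ring, Real.sin_pi_div_two_sub]
    have e2 : Real.cos (π * (1/2 - σ)) = Real.sin (π * σ) := by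
      rw [show π * (1/2 - σ) = π/2 - π*σ by ring, Real.cos_pi_div_two_sub]
    rw [e1, e2]
    push_cast
    ring
  have hcos : Real.sqrt 2 / 2 ≤ Real.cos (π * σ) := by
    rw [← Real.cos_pi_div_four]
    apply Real.cos_le_cos_of_nonneg_of_le_pi (by positivity)
      (by linarith [Real.pi_pos]) (by nlinarith [Real.pi_pos])
  have hc2 : 1/2 ≤ Real.cos (π*σ)^2 := by
    nlinarith [hcos, Real.sq_sqrt (by norm_num : (0:ℝ) ≤ 2), Real.sqrt_nonneg 2]
  have habs_sin : Real.exp (π * |γ|) / 2 ≤ ‖Complex.sin (((π:ℝ):ℂ) * u)‖ := by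
    rw [hsin, Complex.norm_add_mul_I]
    rw [show Real.exp (π * |γ|) / 2 = Real.sqrt ((Real.exp (π * |γ|) / 2)^2) by
      rw [Real.sqrt_sq (by positivity)]]
    apply Real.sqrt_le_sqrt
    have hEF : Real.exp (π*γ) * Real.exp (-(π*γ)) = 1 := by
      rw [← Real.exp_add]; norm_num
    have hsinh : Real.sinh (π*γ) = (Real.exp (π*γ) - Real.exp (-(π*γ)))/2 := by
      rw [Real.sinh_eq]
    have hcosh : Real.cosh (π*γ) = (Real.exp (π*γ) + Real.exp (-(π*γ)))/2 := by
      rw [Real.cosh_eq]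
    have hs1 : Real.sin (π*σ)^2 = 1 - Real.cos (π*σ)^2 := by
      nlinarith [Real.sin_sq_add_cos_sq (π*σ)]
    have key : (Real.cos (π * σ) * Real.cosh (π * γ)) ^ 2
        + (Real.sin (π * σ) * Real.sinh (π * γ)) ^ 2
        = Real.cos (π*σ)^2 + Real.sinh (π*γ)^2 := by
      linear_combination (Real.cos (π*σ)^2) * (Real.cosh_sq_sub_sinh_sq (π*γ))
        + (Real.sinh (π*γ)^2) * (Real.sin_sq_add_cos_sq (π*σ))
    rw [key]
    have hsinh2 : Real.sinh (π*γ)^2 = ((Real.exp (π*γ) - Real.exp (-(π*γ)))/2)^2 := by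
      rw [hsinh]
    rcases abs_cases γ with ⟨hg, _⟩ | ⟨hg, _⟩ <;> rw [hg]
    · nlinarith [hEF, hc2, hsinh2, sq_nonneg (Real.exp (-(π*γ)))]
    · rw [show π * -γ = -(π*γ) by ring]
      nlinarith [hEF, hc2, hsinh2, sq_nonneg (Real.exp (π*γ))]
  -- A * B bound
  have hABle : A * B ≤ 2 * π * Real.exp (-(π*|γ|)) := by
    rw [habsr]
    have hS : (0:ℝ) < ‖Complex.sin (((π:ℝ):ℂ) * u)‖ :=
      lt_of_lt_of_le (by positivity) habs_sin
    rw [div_le_iff₀ hS]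
    have h2 : π = 2 * π * Real.exp (-(π*|γ|)) * (Real.exp (π * |γ|) / 2) := by
      rw [show 2 * π * Real.exp (-(π*|γ|)) * (Real.exp (π * |γ|) / 2)
          = π * (Real.exp (-(π*|γ|)) * Real.exp (π * |γ|)) by ring,
        ← Real.exp_add]
      norm_num
    calc π = 2 * π * Real.exp (-(π*|γ|)) * (Real.exp (π * |γ|) / 2) := h2
      _ ≤ _ := by
        apply mul_le_mul_of_nonneg_left habs_sin
        positivity
  -- ratio
  have hR : Real.Gamma (1/2 - σ) / Real.Gamma (1/2 + σ) ≤ Real.sqrt 2 * π := by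
    rw [div_le_iff₀ hGp]
    calc Real.Gamma (1/2 - σ) ≤ Real.sqrt 2 * π * Real.Gamma (1/2 + σ) := ratio_bound h0 h1
      _ = _ := by ring
  -- combine
  have hA2 : A^2 ≤ Real.sqrt 2 * π * (2 * π * Real.exp (-(π*|γ|))) := by
    calc A^2 = A * A := sq A
      _ ≤ (Real.Gamma (1/2 - σ) / Real.Gamma (1/2 + σ) * B) * A :=
          mul_le_mul_of_nonneg_right stepA hApos
      _ = Real.Gamma (1/2 - σ) / Real.Gamma (1/2 + σ) * (A * B) := by ring
      _ ≤ Real.Gamma (1/2 - σ) / Real.Gamma (1/2 + σ) * (2 * π * Real.exp (-(π*|γ|))) := by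
          apply mul_le_mul_of_nonneg_left hABle
          positivity
      _ ≤ Real.sqrt 2 * π * (2 * π * Real.exp (-(π*|γ|))) := by
          apply mul_le_mul_of_nonneg_right hR
          positivity
  have hCsq : (π * (2:ℝ)^((3:ℝ)/4) * Real.exp (-(π * |γ|) / 2))^2
      = Real.sqrt 2 * π * (2 * π * Real.exp (-(π*|γ|))) := by
    have h32 : ((2:ℝ)^((3:ℝ)/4))^2 = 2 * Real.sqrt 2 := by
      rw [← Real.rpow_natCast ((2:ℝ)^((3:ℝ)/4)) 2, ← Real.rpow_mul (by norm_num)]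
      rw [show (3:ℝ)/4 * (2:ℕ) = 1 + 1/2 by push_cast; norm_num,
        Real.rpow_add (by norm_num), Real.rpow_one, ← Real.sqrt_eq_rpow]
    have hexp : (Real.exp (-(π * |γ|) / 2))^2 = Real.exp (-(π*|γ|)) := by
      rw [pow_two, ← Real.exp_add]
      norm_num
    rw [mul_pow, mul_pow, h32, hexp]
    ring
  have hCpos : (0:ℝ) ≤ π * (2:ℝ)^((3:ℝ)/4) * Real.exp (-(π * |γ|) / 2) := by positivity
  nlinarith [hA2, hCsq, hApos, hCpos]

/-- Lemma 12.5, first bound: for `0 ≤ σ ≤ 1/4` and all real `γ, θ`,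
`|Γ(1/2 - σ + iγ)(1 + 2πiθ)^{-(1/2 - σ + iγ)}| ≤ 10 (1 + θ²)^{σ/2} Re(Γ(1/2)(1 + 2πiθ)^{-1/2})`. -/
theorem gamma_compare (σ γ θ : ℝ) (h0 : 0 ≤ σ) (h1 : σ ≤ 1 / 4) :
    ‖(Complex.Gamma (1 / 2 - (σ : ℂ) + (γ : ℂ) * Complex.I) *
        (1 + 2 * (Real.pi : ℂ) * Complex.I * (θ : ℂ)) ^
          (-(1 / 2 - (σ : ℂ) + (γ : ℂ) * Complex.I)))‖ ≤
      10 * (1 + θ ^ 2) ^ (σ / 2) *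
        (Complex.Gamma (1 / 2) *
          (1 + 2 * (Real.pi : ℂ) * Complex.I * (θ : ℂ)) ^ (-(1 / 2) : ℂ)).re := by
  set a : ℂ := 1 + 2 * (π : ℂ) * Complex.I * (θ : ℂ) with ha
  set s : ℂ := 1 / 2 - (σ : ℂ) + (γ : ℂ) * Complex.I with hs
  have hare : a.re = 1 := by simp [ha]
  have haim : a.im = 2 * π * θ := by simp [ha]
  have ha0 : a ≠ 0 := fun h => by simp [h] at hare
  set M : ℝ := ‖a‖ with hM
  have hM0 : 0 < M := norm_pos_iff.mpr ha0
  have hM1 : 1 ≤ M := by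
    calc (1:ℝ) = |a.re| := by rw [hare]; norm_num
      _ ≤ M := Complex.abs_re_le_norm a
  have hMsq : M^2 = 1 + (2*π*θ)^2 := by
    rw [hM, Complex.sq_norm, Complex.normSq_apply, hare, haim]; ring
  have hM2 : M ≤ 2 * π * Real.sqrt (1 + θ^2) := by
    have h2 : (2 * π * Real.sqrt (1 + θ^2))^2 = 4*π^2*(1+θ^2) := by
      rw [mul_pow, mul_pow, Real.sq_sqrt (by positivity)]; ring
    apply le_of_pow_le_pow_left₀ (two_ne_zero) (by positivity)
    rw [h2, hMsq]
    nlinarith [Real.pi_gt_three, sq_nonneg θ, sq_nonneg (π*θ)]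
  have harg : |Complex.arg a| ≤ π / 2 :=
    Complex.abs_arg_le_pi_div_two_iff.mpr (by rw [hare]; norm_num)
  -- |a ^ (-s)|
  have hsre : (-s).re = σ - 1/2 := by simp [hs]
  have hsim : (-s).im = -γ := by simp [hs]
  have hpow : ‖a ^ (-s)‖ = M ^ (σ - 1/2) * Real.exp (Complex.arg a * γ) := by
    rw [Complex.norm_cpow_of_ne_zero ha0, hsre, hsim]
    rw [show Complex.arg a * -γ = -(Complex.arg a * γ) by ring, Real.exp_neg, div_eq_mul_inv, inv_inv]
  have hexparg : Real.exp (Complex.arg a * γ) ≤ Real.exp (π/2 * |γ|) := by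
    apply Real.exp_le_exp.mpr
    calc Complex.arg a * γ ≤ |Complex.arg a * γ| := le_abs_self _
      _ = |Complex.arg a| * |γ| := abs_mul _ _
      _ ≤ π/2 * |γ| := mul_le_mul_of_nonneg_right harg (abs_nonneg γ)
  -- RHS real part
  have hgh : Complex.Gamma (1/2 : ℂ) = ((Real.sqrt π : ℝ) : ℂ) := by
    rw [show (1/2 : ℂ) = ((1/2 : ℝ) : ℂ) by norm_num, Complex.Gamma_ofReal,
      Real.Gamma_one_half_eq]
  have hrepow : (a ^ (-(1/2) : ℂ)).re = M ^ (-(1/2) : ℝ) * Real.cos (Complex.arg a / 2) := by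
    rw [Complex.cpow_def_of_ne_zero ha0, Complex.exp_re]
    have hre : (Complex.log a * (-(1/2))).re = Real.log M * (-(1/2)) := by
      rw [Complex.mul_re]; simp [Complex.log_re, Complex.log_im]; rfl
    have him : (Complex.log a * (-(1/2))).im = -(Complex.arg a / 2) := by
      rw [Complex.mul_im]; simp [Complex.log_re, Complex.log_im]; ring
    rw [hre, him, Real.cos_neg, Real.rpow_def_of_pos hM0]
  have hcoshalf : Real.sqrt 2 / 2 ≤ Real.cos (Complex.arg a / 2) := by
    rw [← Real.cos_abs, ← Real.cos_pi_div_four]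
    apply Real.cos_le_cos_of_nonneg_of_le_pi (abs_nonneg _) (by linarith [Real.pi_pos])
    rw [abs_div]
    calc |Complex.arg a| / |(2:ℝ)| ≤ (π/2)/2 := by
          rw [show |(2:ℝ)| = 2 by norm_num]
          exact div_le_div_of_nonneg_right harg (by norm_num) |>.trans_eq rfl
      _ = π/4 := by ring
  -- numeric bound
  have hnum : π * (2:ℝ)^((3:ℝ)/4) * (2*π)^((1:ℝ)/4) ≤ 5 * Real.sqrt 2 * Real.sqrt π := by
    apply le_of_pow_le_pow_left₀ (n := 4) (by norm_num) (by positivity)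
    have e1 : ((2:ℝ)^((3:ℝ)/4))^(4:ℕ) = 8 := by
      rw [← Real.rpow_natCast ((2:ℝ)^((3:ℝ)/4)) 4, ← Real.rpow_mul (by norm_num)]
      rw [show (3:ℝ)/4 * (4:ℕ) = (3:ℕ) by push_cast; ring, Real.rpow_natCast]
      norm_num
    have e2 : ((2*π:ℝ)^((1:ℝ)/4))^(4:ℕ) = 2*π := by
      rw [← Real.rpow_natCast ((2*π:ℝ)^((1:ℝ)/4)) 4, ← Real.rpow_mul (by positivity)]
      rw [show (1:ℝ)/4 * (4:ℕ) = (1:ℕ) by push_cast; ring, Real.rpow_natCast]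
      norm_num
    have e3 : (Real.sqrt 2)^(4:ℕ) = 4 := by
      rw [show (4:ℕ) = 2*2 by norm_num, pow_mul, Real.sq_sqrt (by norm_num : (0:ℝ) ≤ 2)]
      norm_num
    have e4 : (Real.sqrt π)^(4:ℕ) = π^2 := by
      rw [show (4:ℕ) = 2*2 by norm_num, pow_mul, Real.sq_sqrt Real.pi_pos.le]
    rw [mul_pow, mul_pow, mul_pow, mul_pow, e1, e2, e3, e4]
    have h4 : π^3 ≤ 64 := by nlinarith [Real.pi_le_four, Real.pi_pos]
    nlinarith [h4, pow_pos Real.pi_pos 2,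
      mul_le_mul_of_nonneg_left h4 (show (0:ℝ) ≤ 16*π^2 by positivity)]
  -- M^σ bound
  have hMσ : M ^ (σ:ℝ) ≤ (2*π)^((1:ℝ)/4) * (1+θ^2)^(σ/2) := by
    have hstep : M ^ (σ:ℝ) ≤ (2*π*Real.sqrt (1+θ^2)) ^ (σ:ℝ) :=
      Real.rpow_le_rpow hM0.le hM2 h0
    have hsplit : (2*π*Real.sqrt (1+θ^2)) ^ (σ:ℝ)
        = (2*π)^(σ:ℝ) * (1+θ^2)^(σ/2) := by
      rw [Real.mul_rpow (by positivity) (Real.sqrt_nonneg _)]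
      congr 1
      rw [Real.sqrt_eq_rpow, ← Real.rpow_mul (by positivity)]
      congr 1
      ring
    have hexp : (2*π)^(σ:ℝ) ≤ (2*π)^((1:ℝ)/4) :=
      Real.rpow_le_rpow_of_exponent_le (by nlinarith [Real.pi_gt_three]) (by linarith)
    calc M ^ (σ:ℝ) ≤ (2*π)^(σ:ℝ) * (1+θ^2)^(σ/2) := by rw [← hsplit]; exact hstep
      _ ≤ (2*π)^((1:ℝ)/4) * (1+θ^2)^(σ/2) :=
          mul_le_mul_of_nonneg_right hexp (Real.rpow_nonneg (by positivity) _)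
  -- LHS bound
  have hGpart := gamma_decay (γ := γ) h0 h1
  have hL : ‖Complex.Gamma s * a ^ (-s)‖ ≤
      π * (2:ℝ)^((3:ℝ)/4) * M ^ (σ - 1/2) := by
    rw [norm_mul, hpow]
    have hend : -(π*|γ|)/2 + π/2*|γ| = 0 := by ring
    calc ‖Complex.Gamma s‖ * (M ^ (σ - 1/2) * Real.exp (Complex.arg a * γ))
        ≤ (π * (2:ℝ)^((3:ℝ)/4) * Real.exp (-(π * |γ|) / 2))
            * (M ^ (σ - 1/2) * Real.exp (π/2 * |γ|)) := by
          apply mul_le_mul hGpart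
            (mul_le_mul_of_nonneg_left hexparg (Real.rpow_nonneg hM0.le _))
            (by positivity) (by positivity)
      _ = π * (2:ℝ)^((3:ℝ)/4) * M ^ (σ - 1/2)
            * (Real.exp (-(π * |γ|) / 2) * Real.exp (π/2 * |γ|)) := by ring
      _ = π * (2:ℝ)^((3:ℝ)/4) * M ^ (σ - 1/2) := by
          rw [← Real.exp_add, hend, Real.exp_zero, mul_one]
  -- rewrite RHS
  rw [hgh]
  have hre10 : ((((Real.sqrt π : ℝ)):ℂ) * (a ^ (-(1/2) : ℂ))).re
      = Real.sqrt π * (a ^ (-(1/2) : ℂ)).re := by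
    rw [Complex.mul_re, Complex.ofReal_re, Complex.ofReal_im]
    ring
  rw [hre10, hrepow]
  have hsplitM : M ^ (σ - 1/2) = M ^ (σ:ℝ) * M ^ (-(1/2) : ℝ) := by
    rw [show σ - 1/2 = σ + -(1/2) by ring, Real.rpow_add hM0]
  have hMhalf : (0:ℝ) ≤ M ^ (-(1/2):ℝ) := Real.rpow_nonneg hM0.le _
  refine hL.trans ?_
  rw [hsplitM]
  have hfinal : π * (2:ℝ)^((3:ℝ)/4) * (M ^ (σ:ℝ) * M ^ (-(1/2):ℝ))
      ≤ 5 * Real.sqrt 2 * Real.sqrt π * (1+θ^2)^(σ/2) * M ^ (-(1/2):ℝ) := by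
    have h1' : π * (2:ℝ)^((3:ℝ)/4) * M ^ (σ:ℝ)
        ≤ 5 * Real.sqrt 2 * Real.sqrt π * (1+θ^2)^(σ/2) := by
      calc π * (2:ℝ)^((3:ℝ)/4) * M ^ (σ:ℝ)
          ≤ π * (2:ℝ)^((3:ℝ)/4) * ((2*π)^((1:ℝ)/4) * (1+θ^2)^(σ/2)) :=
            mul_le_mul_of_nonneg_left hMσ (by positivity)
        _ = (π * (2:ℝ)^((3:ℝ)/4) * (2*π)^((1:ℝ)/4)) * (1+θ^2)^(σ/2) := by ring
        _ ≤ 5 * Real.sqrt 2 * Real.sqrt π * (1+θ^2)^(σ/2) :=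
            mul_le_mul_of_nonneg_right hnum (Real.rpow_nonneg (by positivity) _)
    calc π * (2:ℝ)^((3:ℝ)/4) * (M ^ (σ:ℝ) * M ^ (-(1/2):ℝ))
        = (π * (2:ℝ)^((3:ℝ)/4) * M ^ (σ:ℝ)) * M ^ (-(1/2):ℝ) := by ring
      _ ≤ 5 * Real.sqrt 2 * Real.sqrt π * (1+θ^2)^(σ/2) * M ^ (-(1/2):ℝ) :=
          mul_le_mul_of_nonneg_right h1' hMhalf
  refine hfinal.trans ?_
  have hclose : 5 * Real.sqrt 2 * Real.sqrt π * (1+θ^2)^(σ/2) * M ^ (-(1/2):ℝ)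
      = 10 * (1+θ^2)^(σ/2) * (Real.sqrt π * (M ^ (-(1/2):ℝ) * (Real.sqrt 2 / 2))) := by
    ring
  rw [hclose]
  apply mul_le_mul_of_nonneg_left _ (by positivity)
  apply mul_le_mul_of_nonneg_left _ (Real.sqrt_nonneg π)
  exact mul_le_mul_of_nonneg_left hcoshalf hMhalf
end

section
/- Let p be a prime, let n ≥ 1, and let a₁, a₂ be integers with min(v_p(a₁), v_p(a₂)) = n - r for some integer r ≥ 1 (where v_p denotes the p-adic valuation). If p is odd then |Σ_{x ∈ ℤ/p^nℤ} e((a₁x + a₂x²)/p^n)| ≤ p^{n - r/2}, and if p = 2 then |Σ_{x ∈ ℤ/2^nℤ} e((a₁x + a₂x²)/2^n)| ≤ 2^{1/2} · 2^{n - r/2}. -/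
lemma e_add (a b : ℝ) : e (a + b) = e a * e b := by
  rw [e, e, e, ← Complex.exp_add]; congr 1; push_cast; ring

lemma e_int (k : ℤ) : e k = 1 := by
  rw [e, Complex.exp_eq_one_iff]
  refine ⟨k, ?_⟩
  have : ((k : ℝ) : ℂ) = (k : ℂ) := by norm_cast
  rw [this]; ring

lemma abs_e (θ : ℝ) : ‖e θ‖ = 1 := by
  have h : (2 * Real.pi * Complex.I * θ) = ((2 * Real.pi * θ : ℝ) : ℂ) * Complex.I := by
    push_cast; ring
  rw [e, h, Complex.norm_exp]
  simp [Complex.mul_I_re]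

lemma e_eq_one_iff (θ : ℝ) : e θ = 1 ↔ ∃ k : ℤ, θ = k := by
  rw [e, Complex.exp_eq_one_iff]
  constructor
  · rintro ⟨k, hk⟩
    refine ⟨k, ?_⟩
    have h2 : (2 * Real.pi * Complex.I) ≠ 0 := by
      simp [Real.pi_ne_zero, Complex.I_ne_zero]
    have : (θ : ℂ) * (2 * Real.pi * Complex.I) = (k : ℂ) * (2 * Real.pi * Complex.I) := by
      rw [← hk]; ring
    have := mul_right_cancel₀ h2 this
    exact_mod_cast this
  · rintro ⟨k, rfl⟩
    refine ⟨k, ?_⟩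
    have : ((k : ℝ) : ℂ) = (k : ℂ) := by norm_cast
    rw [this]; ring

lemma e_nat_mul (θ : ℝ) (k : ℕ) : e (k * θ) = e θ ^ k := by
  rw [e, e, ← Complex.exp_nat_mul]; congr 1; push_cast; ring

/-- Orthogonality: geometric sum of `e(c x / M)`. -/
lemma sum_e_eq (M : ℕ) (hM : 0 < M) (c : ℤ) :
    ∑ x ∈ Finset.range M, e (((c * x : ℤ) : ℝ) / (M : ℝ)) =
      if (M : ℤ) ∣ c then (M : ℂ) else 0 := by
  have hM0 : (M : ℝ) ≠ 0 := Nat.cast_ne_zero.mpr hM.ne'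
  have hterm : ∀ x : ℕ, e (((c * x : ℤ) : ℝ) / (M : ℝ)) = e ((c : ℝ) / M) ^ x := by
    intro x
    rw [← e_nat_mul]
    congr 1
    push_cast; ring
  split_ifs with h
  · obtain ⟨k, rfl⟩ := h
    have hone : ∀ x ∈ Finset.range M, e (((((M : ℤ) * k) * x : ℤ) : ℝ) / (M : ℝ)) = 1 := by
      intro x _
      have harg : ((((M : ℤ) * k) * x : ℤ) : ℝ) / (M : ℝ) = ((k * x : ℤ) : ℝ) := by
        push_cast; field_simp
      rw [harg, e_int]
    rw [Finset.sum_congr rfl hone]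
    simp
  · have hz : e ((c : ℝ) / M) ≠ 1 := by
      rw [Ne, e_eq_one_iff]
      rintro ⟨k, hk⟩
      apply h
      rw [div_eq_iff hM0] at hk
      exact ⟨k, by exact_mod_cast (by rw [hk]; ring : (c : ℝ) = ((M : ℝ) * k))⟩
    have hpow : e ((c : ℝ) / M) ^ M = 1 := by
      rw [← e_nat_mul]
      have : (M : ℝ) * ((c : ℝ) / M) = ((c : ℤ) : ℝ) := by field_simp
      rw [this, e_int]
    rw [Finset.sum_congr rfl (fun x _ => hterm x), geom_sum_eq hz, hpow]
    simp

/-- shifting a sum of an `M`-periodic function by one. -/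
lemma sum_shift_one {M : ℕ} {f : ℕ → ℂ} (hf : ∀ x, f (x + M) = f x) :
    ∑ x ∈ Finset.range M, f (x + 1) = ∑ x ∈ Finset.range M, f x := by
  have h1 := Finset.sum_range_succ' f M
  have h2 := Finset.sum_range_succ f M
  have h0 : f M = f 0 := by simpa using hf 0
  linear_combination h2 - h1 + h0

lemma sum_shift {M : ℕ} {f : ℕ → ℂ} (hf : ∀ x, f (x + M) = f x) (s : ℕ) :
    ∑ x ∈ Finset.range M, f (s + x) = ∑ x ∈ Finset.range M, f x := by
  induction s with
  | zero => simp
  | succ s ih =>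
    have hg : ∀ x, f (s + (x + M)) = f (s + x) := by
      intro x
      rw [show s + (x + M) = (s + x) + M by ring, hf]
    calc ∑ x ∈ Finset.range M, f (s + 1 + x)
        = ∑ x ∈ Finset.range M, f (s + (x + 1)) := by
          refine Finset.sum_congr rfl fun x _ => by rw [show s + 1 + x = s + (x + 1) by ring]
      _ = ∑ x ∈ Finset.range M, f (s + x) := sum_shift_one (f := fun x => f (s + x)) hg
      _ = ∑ x ∈ Finset.range M, f x := ih

lemma sum_periodic_mul {M : ℕ} {f : ℕ → ℂ} (hf : ∀ x, f (x + M) = f x) (k : ℕ) :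
    ∑ x ∈ Finset.range (k * M), f x = (k : ℂ) * ∑ x ∈ Finset.range M, f x := by
  induction k with
  | zero => simp
  | succ k ih =>
    rw [show (k + 1) * M = k * M + M by ring, Finset.sum_range_add, ih,
      sum_shift hf (k * M)]
    push_cast; ring

/-- Phase shift identity for the quadratic exponential. -/
lemma F_shift (b₁ b₂ : ℤ) (M : ℕ) (x s : ℕ) :
    e (((b₁ * (x + s : ℕ) + b₂ * (x + s : ℕ) ^ 2 : ℤ) : ℝ) / (M : ℝ)) =
      e (((b₁ * x + b₂ * x ^ 2 : ℤ) : ℝ) / (M : ℝ)) *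
        e (((b₁ * s + 2 * b₂ * x * s + b₂ * s ^ 2 : ℤ) : ℝ) / (M : ℝ)) := by
  rw [← e_add, ← add_div]
  congr 1
  push_cast
  ring

lemma F_periodic (b₁ b₂ : ℤ) (M : ℕ) (hM : 0 < M) (x : ℕ) :
    e (((b₁ * (x + M : ℕ) + b₂ * (x + M : ℕ) ^ 2 : ℤ) : ℝ) / (M : ℝ)) =
      e (((b₁ * x + b₂ * x ^ 2 : ℤ) : ℝ) / (M : ℝ)) := by
  have hM0 : (M : ℝ) ≠ 0 := Nat.cast_ne_zero.mpr hM.ne'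
  rw [F_shift]
  have harg : ((b₁ * M + 2 * b₂ * x * M + b₂ * M ^ 2 : ℤ) : ℝ) / (M : ℝ)
      = ((b₁ + 2 * b₂ * x + b₂ * M : ℤ) : ℝ) := by
    push_cast; field_simp
  rw [harg, e_int, mul_one]

/-- Squaring bound for the quadratic exponential sum. -/
lemma sq_bound (b₁ b₂ : ℤ) (M : ℕ) (hM : 0 < M) :
    (‖∑ x ∈ Finset.range M, e (((b₁ * x + b₂ * x ^ 2 : ℤ) : ℝ) / (M : ℝ))‖) ^ 2
      ≤ (M : ℝ) * (((Finset.range M).filter (fun h : ℕ => (M : ℤ) ∣ 2 * b₂ * (h : ℤ))).card : ℝ) := by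
  set F : ℕ → ℂ := fun x => e (((b₁ * x + b₂ * x ^ 2 : ℤ) : ℝ) / (M : ℝ)) with hF
  set T := ∑ x ∈ Finset.range M, F x with hT
  have hper : ∀ x, F (x + M) = F x := fun x => F_periodic b₁ b₂ M hM x
  have habs : ∀ x, F x * (starRingEnd ℂ) (F x) = 1 := by
    intro x
    rw [Complex.mul_conj, Complex.normSq_eq_norm_sq]
    simp [hF, abs_e]
  have key : T * (starRingEnd ℂ) T =
      ∑ h ∈ Finset.range M, (e (((b₁ * h + b₂ * h ^ 2 : ℤ) : ℝ) / (M : ℝ)) *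
        (if (M : ℤ) ∣ 2 * b₂ * h then (M : ℂ) else 0)) := by
    have step1 : T * (starRingEnd ℂ) T =
        ∑ x ∈ Finset.range M, ((starRingEnd ℂ) (F x) * T) := by
      rw [mul_comm, hT, map_sum, Finset.sum_mul]
    have step2 : ∀ x ∈ Finset.range M, (starRingEnd ℂ) (F x) * T =
        ∑ h ∈ Finset.range M,
          (e (((b₁ * h + b₂ * h ^ 2 : ℤ) : ℝ) / (M : ℝ)) *
            e ((((2 * b₂ * h) * x : ℤ) : ℝ) / (M : ℝ))) := by
      intro x _
      have hre : T = ∑ h ∈ Finset.range M, F (x + h) := (sum_shift hper x).symm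
      rw [hre, Finset.mul_sum]
      refine Finset.sum_congr rfl fun h _ => ?_
      have hsplit : e (((b₁ * h + 2 * b₂ * x * h + b₂ * h ^ 2 : ℤ) : ℝ) / (M : ℝ)) =
          e (((b₁ * h + b₂ * h ^ 2 : ℤ) : ℝ) / (M : ℝ)) *
            e ((((2 * b₂ * h) * x : ℤ) : ℝ) / (M : ℝ)) := by
        rw [← e_add, ← add_div]
        congr 1
        push_cast; ring
      calc (starRingEnd ℂ) (F x) * F (x + h)
          = (starRingEnd ℂ) (F x) * (F x *
              e (((b₁ * h + 2 * b₂ * x * h + b₂ * h ^ 2 : ℤ) : ℝ) / (M : ℝ))) := by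
            rw [hF]; dsimp only; rw [F_shift b₁ b₂ M x h]
        _ = (F x * (starRingEnd ℂ) (F x)) *
              e (((b₁ * h + 2 * b₂ * x * h + b₂ * h ^ 2 : ℤ) : ℝ) / (M : ℝ)) := by ring
        _ = e (((b₁ * h + 2 * b₂ * x * h + b₂ * h ^ 2 : ℤ) : ℝ) / (M : ℝ)) := by
            rw [habs x, one_mul]
        _ = _ := hsplit
    rw [step1, Finset.sum_congr rfl step2, Finset.sum_comm]
    refine Finset.sum_congr rfl fun h _ => ?_
    rw [← Finset.mul_sum, sum_e_eq M hM (2 * b₂ * h)]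
  have habsT : ‖T‖ ^ 2 = ‖T * (starRingEnd ℂ) T‖ := by
    rw [norm_mul, Complex.norm_conj]; ring
  rw [habsT, key]
  calc ‖∑ h ∈ Finset.range M, (e (((b₁ * h + b₂ * h ^ 2 : ℤ) : ℝ) / (M : ℝ)) *
        (if (M : ℤ) ∣ 2 * b₂ * h then (M : ℂ) else 0))‖
      ≤ ∑ h ∈ Finset.range M, ‖e (((b₁ * h + b₂ * h ^ 2 : ℤ) : ℝ) / (M : ℝ)) *
        (if (M : ℤ) ∣ 2 * b₂ * h then (M : ℂ) else 0)‖ := norm_sum_le _ _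
    _ = ∑ h ∈ Finset.range M, (if (M : ℤ) ∣ 2 * b₂ * h then (M : ℝ) else 0) := by
        refine Finset.sum_congr rfl fun h _ => ?_
        rw [norm_mul, abs_e, one_mul]
        split_ifs
        · exact Complex.norm_natCast M
        · simp
    _ = ∑ h ∈ (Finset.range M).filter (fun h : ℕ => (M : ℤ) ∣ 2 * b₂ * (h : ℤ)), (M : ℝ) :=
        (Finset.sum_filter _ _).symm
    _ = (((Finset.range M).filter (fun h : ℕ => (M : ℤ) ∣ 2 * b₂ * (h : ℤ))).card : ℝ) * (M : ℝ) := by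
        rw [Finset.sum_const, nsmul_eq_mul]
    _ = _ := by ring

/-- The sum vanishes when `p ∣ b₂` but `p ∤ b₁`. -/
lemma T_zero (p : ℕ) (hp : p.Prime) (r' : ℕ) (b₁ c : ℤ) (h1 : ¬(p : ℤ) ∣ b₁) :
    ∑ x ∈ Finset.range (p ^ (r' + 1)),
      e (((b₁ * x + ((p : ℤ) * c) * x ^ 2 : ℤ) : ℝ) / ((p ^ (r' + 1) : ℕ) : ℝ)) = 0 := by
  set M := p ^ (r' + 1) with hMdef
  set b₂ : ℤ := (p : ℤ) * c with hb₂
  set F : ℕ → ℂ := fun x => e (((b₁ * x + b₂ * x ^ 2 : ℤ) : ℝ) / (M : ℝ)) with hF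
  have hMpos : 0 < M := Nat.pow_pos hp.pos
  have hp0 : (p : ℝ) ≠ 0 := Nat.cast_ne_zero.mpr hp.pos.ne'
  have hper : ∀ x, F (x + M) = F x := fun x => F_periodic b₁ b₂ M hMpos x
  set ω : ℂ := e ((b₁ : ℝ) / (p : ℝ)) with hω
  have hshift : ∀ x : ℕ, F (x + p ^ r') = F x * ω := by
    intro x
    rw [hF]
    dsimp only
    rw [F_shift b₁ b₂ M x (p ^ r')]
    congr 1
    have harg : ((b₁ * (p ^ r' : ℕ) + 2 * b₂ * x * (p ^ r' : ℕ) + b₂ * (p ^ r' : ℕ) ^ 2 : ℤ) : ℝ)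
        / (M : ℝ) = (b₁ : ℝ) / (p : ℝ) + ((2 * c * x + c * (p ^ r' : ℕ) : ℤ) : ℝ) := by
      rw [hb₂, hMdef]
      push_cast
      field_simp
      ring
    rw [harg, e_add, e_int, mul_one]
  have hT : ∑ x ∈ Finset.range M, F x = (∑ x ∈ Finset.range M, F x) * ω := by
    calc ∑ x ∈ Finset.range M, F x = ∑ x ∈ Finset.range M, F (p ^ r' + x) :=
          (sum_shift hper (p ^ r')).symm
      _ = ∑ x ∈ Finset.range M, (F x * ω) := by
          refine Finset.sum_congr rfl fun x _ => ?_
          rw [add_comm, hshift x]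
      _ = (∑ x ∈ Finset.range M, F x) * ω := by rw [Finset.sum_mul]
  have hωne : ω ≠ 1 := by
    rw [hω, Ne, e_eq_one_iff]
    rintro ⟨k, hk⟩
    apply h1
    rw [div_eq_iff hp0] at hk
    refine ⟨k, ?_⟩
    exact_mod_cast (by rw [hk]; ring : (b₁ : ℝ) = ((p : ℝ) * k))
  have hzero : (∑ x ∈ Finset.range M, F x) * (ω - 1) = 0 := by
    linear_combination (-1 : ℂ) * hT
  rcases mul_eq_zero.mp hzero with h | h
  · exact h
  · exact absurd (sub_eq_zero.mp h) hωne

lemma count_odd (p : ℕ) (hp : p.Prime) (hodd : p ≠ 2) (r : ℕ) (b₂ : ℤ)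
    (hb : ¬(p : ℤ) ∣ b₂) :
    (((Finset.range (p ^ r)).filter
      (fun h : ℕ => ((p ^ r : ℕ) : ℤ) ∣ 2 * b₂ * (h : ℤ))).card : ℝ) ≤ 1 := by
  have hpz : Prime (p : ℤ) := Int.prime_iff_natAbs_prime.mpr (by simpa)
  have hsub : (Finset.range (p ^ r)).filter
      (fun h : ℕ => ((p ^ r : ℕ) : ℤ) ∣ 2 * b₂ * (h : ℤ)) ⊆ {0} := by
    intro h hh
    simp only [Finset.mem_filter, Finset.mem_range] at hh
    obtain ⟨hlt, hdvd⟩ := hh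
    have hnd : ¬(p : ℤ) ∣ 2 * b₂ := by
      intro hd
      rcases hpz.dvd_mul.mp hd with h2 | h2
      · have : p ∣ 2 := by exact_mod_cast h2
        exact hodd ((Nat.prime_dvd_prime_iff_eq hp Nat.prime_two).mp this)
      · exact hb h2
    have hdvd' : ((p : ℤ)) ^ r ∣ (2 * b₂) * (h : ℤ) := by
      push_cast at hdvd
      exact hdvd
    have := hpz.pow_dvd_of_dvd_mul_left r hnd hdvd'
    have hh' : p ^ r ∣ h := by exact_mod_cast this
    have := Nat.eq_zero_of_dvd_of_lt hh' hlt
    simp [this]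
  calc ((((Finset.range (p ^ r)).filter
        (fun h : ℕ => ((p ^ r : ℕ) : ℤ) ∣ 2 * b₂ * (h : ℤ))).card : ℕ) : ℝ)
      ≤ ((({0} : Finset ℕ).card : ℕ) : ℝ) := by
        exact_mod_cast Finset.card_le_card hsub
    _ = 1 := by simp

lemma count_two (r' : ℕ) (b₂ : ℤ) (hb : ¬(2 : ℤ) ∣ b₂) :
    (((Finset.range (2 ^ (r' + 1))).filter
      (fun h : ℕ => ((2 ^ (r' + 1) : ℕ) : ℤ) ∣ 2 * b₂ * (h : ℤ))).card : ℝ) ≤ 2 := by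
  have hsub : (Finset.range (2 ^ (r' + 1))).filter
      (fun h : ℕ => ((2 ^ (r' + 1) : ℕ) : ℤ) ∣ 2 * b₂ * (h : ℤ)) ⊆ {0, 2 ^ r'} := by
    intro h hh
    simp only [Finset.mem_filter, Finset.mem_range] at hh
    obtain ⟨hlt, hdvd⟩ := hh
    have hdvd' : (2 : ℤ) * (2 : ℤ) ^ r' ∣ (2 : ℤ) * (b₂ * (h : ℤ)) := by
      push_cast at hdvd
      calc (2 : ℤ) * (2 : ℤ) ^ r' = (2 : ℤ) ^ (r' + 1) := by ring
        _ ∣ 2 * b₂ * (h : ℤ) := hdvd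
        _ = (2 : ℤ) * (b₂ * (h : ℤ)) := by ring
    have hd2 : (2 : ℤ) ^ r' ∣ b₂ * (h : ℤ) :=
      (mul_dvd_mul_iff_left (by norm_num : (2 : ℤ) ≠ 0)).mp hdvd'
    have hd3 : (2 : ℤ) ^ r' ∣ (h : ℤ) := Int.prime_two.pow_dvd_of_dvd_mul_left r' hb hd2
    have hd4 : 2 ^ r' ∣ h := by exact_mod_cast hd3
    obtain ⟨k, rfl⟩ := hd4
    have hk : k < 2 := by
      by_contra hk
      push_neg at hk
      have : 2 ^ (r' + 1) ≤ 2 ^ r' * k := by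
        calc 2 ^ (r' + 1) = 2 ^ r' * 2 := by ring
          _ ≤ 2 ^ r' * k := Nat.mul_le_mul_left _ hk
      omega
    interval_cases k
    · simp
    · simp
  calc ((((Finset.range (2 ^ (r' + 1))).filter
        (fun h : ℕ => ((2 ^ (r' + 1) : ℕ) : ℤ) ∣ 2 * b₂ * (h : ℤ))).card : ℕ) : ℝ)
      ≤ ((({0, 2 ^ r'} : Finset ℕ).card : ℕ) : ℝ) := by
        exact_mod_cast Finset.card_le_card hsub
    _ ≤ 2 := by
      have := Finset.card_insert_le (0 : ℕ) ({2 ^ r'} : Finset ℕ)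
      simp only [Finset.card_singleton] at this
      exact_mod_cast this

lemma T_bound_odd (p : ℕ) (hp : p.Prime) (hp2 : p ≠ 2) (r : ℕ) (hr : 1 ≤ r)
    (b₁ b₂ : ℤ) (hb : ¬(p : ℤ) ∣ b₁ ∨ ¬(p : ℤ) ∣ b₂) :
    ‖∑ x ∈ Finset.range (p ^ r),
      e (((b₁ * x + b₂ * x ^ 2 : ℤ) : ℝ) / ((p ^ r : ℕ) : ℝ))‖ ≤ (p : ℝ) ^ ((r : ℝ) / 2) := by
  have hppos : (0 : ℝ) < (p : ℝ) := by exact_mod_cast hp.pos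
  by_cases hb₂ : (p : ℤ) ∣ b₂
  · have hb₁ : ¬(p : ℤ) ∣ b₁ := by
      rcases hb with h | h
      · exact h
      · exact absurd hb₂ h
    obtain ⟨r', rfl⟩ : ∃ r', r = r' + 1 := ⟨r - 1, by omega⟩
    obtain ⟨c, rfl⟩ := hb₂
    rw [T_zero p hp r' b₁ c hb₁]
    simpa using Real.rpow_nonneg hppos.le _
  · have hMpos : 0 < p ^ r := Nat.pow_pos hp.pos
    have hsq := sq_bound b₁ b₂ (p ^ r) hMpos
    have hcard := count_odd p hp hp2 r b₂ hb₂
    have hB : (p : ℝ) ^ ((r : ℝ) / 2) * (p : ℝ) ^ ((r : ℝ) / 2) = ((p ^ r : ℕ) : ℝ) := by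
      rw [← Real.rpow_add hppos, show (r : ℝ) / 2 + (r : ℝ) / 2 = ((r : ℕ) : ℝ) by ring,
        Real.rpow_natCast]
      push_cast; ring
    nlinarith [norm_nonneg (∑ x ∈ Finset.range (p ^ r),
        e (((b₁ * x + b₂ * x ^ 2 : ℤ) : ℝ) / ((p ^ r : ℕ) : ℝ))),
      Real.rpow_nonneg hppos.le ((r : ℝ) / 2),
      (by positivity : (0:ℝ) ≤ ((p ^ r : ℕ) : ℝ)), hsq, hcard, hB]

lemma T_bound_two (r : ℕ) (hr : 1 ≤ r) (b₁ b₂ : ℤ)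
    (hb : ¬(2 : ℤ) ∣ b₁ ∨ ¬(2 : ℤ) ∣ b₂) :
    ‖∑ x ∈ Finset.range (2 ^ r),
      e (((b₁ * x + b₂ * x ^ 2 : ℤ) : ℝ) / ((2 ^ r : ℕ) : ℝ))‖ ≤
      (2 : ℝ) ^ ((1 : ℝ) / 2) * (2 : ℝ) ^ ((r : ℝ) / 2) := by
  have hppos : (0 : ℝ) < (2 : ℝ) := by norm_num
  by_cases hb₂ : (2 : ℤ) ∣ b₂
  · have hb₁ : ¬(2 : ℤ) ∣ b₁ := by
      rcases hb with h | h
      · exact h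
      · exact absurd hb₂ h
    obtain ⟨r', rfl⟩ : ∃ r', r = r' + 1 := ⟨r - 1, by omega⟩
    obtain ⟨c, rfl⟩ := hb₂
    have h0 := T_zero 2 Nat.prime_two r' b₁ c hb₁
    push_cast at h0 ⊢
    rw [h0]
    simp only [norm_zero]
    positivity
  · obtain ⟨r', rfl⟩ : ∃ r', r = r' + 1 := ⟨r - 1, by omega⟩
    have hMpos : 0 < 2 ^ (r' + 1) := Nat.pow_pos (by norm_num)
    have hsq := sq_bound b₁ b₂ (2 ^ (r' + 1)) hMpos
    have hcard := count_two r' b₂ hb₂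
    set R : ℝ := ((r' + 1 : ℕ) : ℝ) with hR
    have hB : ((2 : ℝ) ^ ((1 : ℝ) / 2) * (2 : ℝ) ^ (R / 2)) *
        ((2 : ℝ) ^ ((1 : ℝ) / 2) * (2 : ℝ) ^ (R / 2)) = ((2 ^ (r' + 1) : ℕ) : ℝ) * 2 := by
      rw [show ((2:ℝ) ^ ((1:ℝ)/2) * (2:ℝ) ^ (R/2)) * ((2:ℝ) ^ ((1:ℝ)/2) * (2:ℝ) ^ (R/2))
          = ((2:ℝ) ^ ((1:ℝ)/2) * (2:ℝ) ^ ((1:ℝ)/2)) * ((2:ℝ) ^ (R/2) * (2:ℝ) ^ (R/2)) by ring,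
        ← Real.rpow_add hppos, ← Real.rpow_add hppos,
        show (1:ℝ)/2 + (1:ℝ)/2 = (1:ℝ) by ring,
        show R/2 + R/2 = R by ring, hR, Real.rpow_one, Real.rpow_natCast]
      push_cast; ring
    nlinarith [norm_nonneg (∑ x ∈ Finset.range (2 ^ (r' + 1)),
        e (((b₁ * x + b₂ * x ^ 2 : ℤ) : ℝ) / ((2 ^ (r' + 1) : ℕ) : ℝ))),
      Real.rpow_nonneg hppos.le ((1 : ℝ) / 2), Real.rpow_nonneg hppos.le (R / 2),
      (by positivity : (0:ℝ) ≤ ((2 ^ (r' + 1) : ℕ) : ℝ)), hsq, hcard, hB,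
      mul_nonneg (Real.rpow_nonneg hppos.le ((1 : ℝ) / 2)) (Real.rpow_nonneg hppos.le (R / 2))]

/-- Lemma E.1: if `min(v_p(a₁), v_p(a₂)) = n - r` with `r ≥ 1`, then the quadratic
exponential sum `∑_{x ∈ ℤ/p^nℤ} e((a₁x + a₂x²)/p^n)` is at most `p^{n - r/2}` for odd
`p`, and at most `√2 · 2^{n - r/2}` for `p = 2`. -/
theorem quadratic_bd (p : ℕ) (hp : p.Prime) (n : ℕ) (hn : 1 ≤ n)
    (a₁ a₂ : ℤ) (ha₁ : a₁ ≠ 0) (ha₂ : a₂ ≠ 0) (r : ℕ) (hr : 1 ≤ r)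
    (hval : (min (padicValInt p a₁) (padicValInt p a₂) : ℤ) = (n : ℤ) - (r : ℤ)) :
    (Odd p →
      ‖∑ x ∈ Finset.range (p ^ n),
          e (((a₁ * x + a₂ * x ^ 2 : ℤ) : ℝ) / (p : ℝ) ^ n)‖ ≤
        (p : ℝ) ^ ((n : ℝ) - (r : ℝ) / 2)) ∧
    (p = 2 →
      ‖∑ x ∈ Finset.range (2 ^ n),
          e (((a₁ * x + a₂ * x ^ 2 : ℤ) : ℝ) / (2 : ℝ) ^ n)‖ ≤
        (2 : ℝ) ^ ((1 : ℝ) / 2) * (2 : ℝ) ^ ((n : ℝ) - (r : ℝ) / 2)) := by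
  haveI : Fact p.Prime := ⟨hp⟩
  have hppos : (0 : ℝ) < (p : ℝ) := by exact_mod_cast hp.pos
  set v₁ := padicValInt p a₁ with hv₁
  set v₂ := padicValInt p a₂ with hv₂
  set m := min v₁ v₂ with hm
  have hmn : n = m + r := by omega
  obtain ⟨b₁, hb₁⟩ : ∃ b, a₁ = (p : ℤ) ^ m * b :=
    (padicValInt_dvd_iff m a₁).mpr (Or.inr (min_le_left _ _))
  obtain ⟨b₂, hb₂⟩ : ∃ b, a₂ = (p : ℤ) ^ m * b :=
    (padicValInt_dvd_iff m a₂).mpr (Or.inr (min_le_right _ _))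
  have key : ∀ (a b : ℤ), a ≠ 0 → a = (p : ℤ) ^ m * b → padicValInt p a = m →
      ¬(p : ℤ) ∣ b := by
    intro a b ha hab hv hdvd
    obtain ⟨c, rfl⟩ := hdvd
    have hd : (p : ℤ) ^ (m + 1) ∣ a := ⟨c, by rw [hab]; ring⟩
    rcases (padicValInt_dvd_iff (m + 1) a).mp hd with h | h
    · exact ha h
    · omega
  have hcase : ¬(p : ℤ) ∣ b₁ ∨ ¬(p : ℤ) ∣ b₂ := by
    rcases le_total v₁ v₂ with hle | hle
    · exact Or.inl (key a₁ b₁ ha₁ hb₁ (by rw [← hv₁]; omega))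
    · exact Or.inr (key a₂ b₂ ha₂ hb₂ (by rw [← hv₂]; omega))
  have hfun : ∀ x : ℕ, ((a₁ * x + a₂ * x ^ 2 : ℤ) : ℝ) / (p : ℝ) ^ n =
      ((b₁ * x + b₂ * x ^ 2 : ℤ) : ℝ) / ((p ^ r : ℕ) : ℝ) := by
    intro x
    rw [hb₁, hb₂, hmn]
    push_cast
    rw [pow_add]
    field_simp
  have hper : ∀ x : ℕ,
      e (((b₁ * (x + p ^ r : ℕ) + b₂ * (x + p ^ r : ℕ) ^ 2 : ℤ) : ℝ) / ((p ^ r : ℕ) : ℝ)) =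
      e (((b₁ * x + b₂ * x ^ 2 : ℤ) : ℝ) / ((p ^ r : ℕ) : ℝ)) :=
    fun x => F_periodic b₁ b₂ (p ^ r) (Nat.pow_pos hp.pos) x
  have hsum : ∑ x ∈ Finset.range (p ^ n),
      e (((a₁ * x + a₂ * x ^ 2 : ℤ) : ℝ) / (p : ℝ) ^ n) =
      ((p ^ m : ℕ) : ℂ) * ∑ x ∈ Finset.range (p ^ r),
        e (((b₁ * x + b₂ * x ^ 2 : ℤ) : ℝ) / ((p ^ r : ℕ) : ℝ)) := by
    calc ∑ x ∈ Finset.range (p ^ n), e (((a₁ * x + a₂ * x ^ 2 : ℤ) : ℝ) / (p : ℝ) ^ n)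
        = ∑ x ∈ Finset.range (p ^ n),
            e (((b₁ * x + b₂ * x ^ 2 : ℤ) : ℝ) / ((p ^ r : ℕ) : ℝ)) :=
          Finset.sum_congr rfl fun x _ => by rw [hfun x]
      _ = ∑ x ∈ Finset.range (p ^ m * p ^ r),
            e (((b₁ * x + b₂ * x ^ 2 : ℤ) : ℝ) / ((p ^ r : ℕ) : ℝ)) := by
          rw [hmn, pow_add]
      _ = _ := sum_periodic_mul hper (p ^ m)
  have habs : ‖∑ x ∈ Finset.range (p ^ n),
      e (((a₁ * x + a₂ * x ^ 2 : ℤ) : ℝ) / (p : ℝ) ^ n)‖ =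
      ((p ^ m : ℕ) : ℝ) * ‖∑ x ∈ Finset.range (p ^ r),
        e (((b₁ * x + b₂ * x ^ 2 : ℤ) : ℝ) / ((p ^ r : ℕ) : ℝ))‖ := by
    rw [hsum, norm_mul, Complex.norm_natCast]
  have hfactor : ((p ^ m : ℕ) : ℝ) * (p : ℝ) ^ ((r : ℝ) / 2) =
      (p : ℝ) ^ ((n : ℝ) - (r : ℝ) / 2) := by
    have h1 : ((p ^ m : ℕ) : ℝ) = (p : ℝ) ^ ((m : ℕ) : ℝ) := by
      rw [Real.rpow_natCast]; push_cast; ring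
    rw [h1, ← Real.rpow_add hppos]
    congr 1
    have : (n : ℝ) = (m : ℝ) + (r : ℝ) := by exact_mod_cast congrArg (Nat.cast : ℕ → ℝ) hmn
    rw [this]; ring
  constructor
  · intro hodd
    have hp2 : p ≠ 2 := by
      rintro rfl
      simp [Nat.odd_iff] at hodd
    rw [habs, ← hfactor]
    have hT := T_bound_odd p hp hp2 r hr b₁ b₂ hcase
    have hnn : (0 : ℝ) ≤ ((p ^ m : ℕ) : ℝ) := by positivity
    exact mul_le_mul_of_nonneg_left hT hnn
  · intro hp2
    subst hp2
    simp only [Nat.cast_ofNat] at habs hfactor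
    rw [habs, ← hfactor]
    have hT := T_bound_two r hr b₁ b₂ hcase
    have hnn : (0 : ℝ) ≤ ((2 ^ m : ℕ) : ℝ) := by positivity
    calc ((2 ^ m : ℕ) : ℝ) * ‖∑ x ∈ Finset.range (2 ^ r),
          e (((b₁ * x + b₂ * x ^ 2 : ℤ) : ℝ) / ((2 ^ r : ℕ) : ℝ))‖
        ≤ ((2 ^ m : ℕ) : ℝ) * ((2 : ℝ) ^ ((1 : ℝ) / 2) * (2 : ℝ) ^ ((r : ℝ) / 2)) :=
          mul_le_mul_of_nonneg_left hT hnn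
      _ = (2 : ℝ) ^ ((1 : ℝ) / 2) * (((2 ^ m : ℕ) : ℝ) * (2 : ℝ) ^ ((r : ℝ) / 2)) := by ring
end

section
/- For all real x, y with 1/4 ≤ x ≤ 1/2: |Γ(x + iy)| ≤ 7 · e^{-π|y|/2}. -/
open Complex Filter Finset Real Topology

/-- Absolute value of the Euler `GammaSeq` at `a + y i`. -/
lemma abs_gammaSeq_eq (a y : ℝ) {n : ℕ} (hn : 0 < n) :
    ‖Complex.GammaSeq ((a : ℂ) + (y : ℂ) * Complex.I) n‖ =
      (n : ℝ) ^ a * (n.factorial : ℝ) /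
        ∏ j ∈ Finset.range (n + 1), Real.sqrt ((a + j) ^ 2 + y ^ 2) := by
  rw [Complex.GammaSeq, norm_div, norm_mul, norm_prod]
  congr 1
  · congr 1
    · rw [← Complex.ofReal_natCast n,
        Complex.norm_cpow_eq_rpow_re_of_pos (by exact_mod_cast hn)]
      simp
    · simp [Nat.factorial]
  · refine Finset.prod_congr rfl fun j _ => ?_
    rw [show (a : ℂ) + (y : ℂ) * Complex.I + (j : ℕ) =
        ((a + j : ℝ) : ℂ) + ((y : ℝ) : ℂ) * Complex.I by push_cast; ring,
      Complex.norm_def, Complex.normSq_add_mul_I]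

/-- Monotonicity of `|Γ(a+iy)|/Γ(a)` in `a`. -/
lemma abs_gamma_mul_mono {a b : ℝ} (y : ℝ) (ha : 0 < a) (hab : a ≤ b) :
    ‖Complex.Gamma ((a : ℂ) + (y : ℂ) * Complex.I)‖ * Real.Gamma b ≤
      ‖Complex.Gamma ((b : ℂ) + (y : ℂ) * Complex.I)‖ * Real.Gamma a := by
  have hb : 0 < b := ha.trans_le hab
  have hG : ∀ c : ℝ, 0 < c → Real.Gamma c =
      ‖Complex.Gamma ((c : ℂ) + ((0 : ℝ) : ℂ) * Complex.I)‖ := by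
    intro c hc
    rw [Complex.ofReal_zero, zero_mul, add_zero, Complex.Gamma_ofReal, Complex.norm_real, Real.norm_eq_abs,
      abs_of_pos (Real.Gamma_pos_of_pos hc)]
  rw [hG b hb, hG a ha]
  have key : ∀ c d : ℝ, Tendsto
      (fun n => ‖Complex.GammaSeq ((c : ℂ) + (d : ℂ) * Complex.I) n‖) atTop
      (𝓝 (‖Complex.Gamma ((c : ℂ) + (d : ℂ) * Complex.I)‖)) :=
    fun c d => (continuous_norm.tendsto _).comp (Complex.GammaSeq_tendsto_Gamma _)
  refine le_of_tendsto_of_tendsto ((key a y).mul (key b 0)) ((key b y).mul (key a 0)) ?_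
  filter_upwards [eventually_gt_atTop 0] with n hn
  rw [abs_gammaSeq_eq a y hn, abs_gammaSeq_eq b 0 hn, abs_gammaSeq_eq b y hn,
    abs_gammaSeq_eq a 0 hn, div_mul_div_comm, div_mul_div_comm,
    show (n : ℝ) ^ a * n.factorial * ((n : ℝ) ^ b * n.factorial) =
      (n : ℝ) ^ b * n.factorial * ((n : ℝ) ^ a * n.factorial) by ring]
  have hden : ∀ c : ℝ, 0 < c → ∀ d : ℝ,
      0 < ∏ j ∈ Finset.range (n + 1), Real.sqrt ((c + j) ^ 2 + d ^ 2) := by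
    intro c hc d
    refine Finset.prod_pos fun j _ => Real.sqrt_pos.mpr ?_
    have hj : (0 : ℝ) ≤ j := Nat.cast_nonneg j
    nlinarith [sq_nonneg d]
  refine div_le_div_of_nonneg_left (by positivity) (mul_pos (hden b hb y) (hden a ha 0)) ?_
  rw [← Finset.prod_mul_distrib, ← Finset.prod_mul_distrib]
  refine Finset.prod_le_prod (fun j _ => by positivity) (fun j _ => ?_)
  rw [← Real.sqrt_mul (by positivity), ← Real.sqrt_mul (by positivity)]
  apply Real.sqrt_le_sqrt
  have hj : (0 : ℝ) ≤ j := Nat.cast_nonneg j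
  have hsq : (a + j) ^ 2 ≤ (b + j) ^ 2 := by nlinarith
  nlinarith [mul_le_mul_of_nonneg_left hsq (sq_nonneg y)]

lemma exp_034pi_le : Real.exp (0.34 * Real.pi) ≤ 3.0625 := by
  have h1 : (0.34 : ℝ) * Real.pi ≤ 1.071 := by nlinarith [Real.pi_lt_d2]
  have h2 : Real.exp (0.34 * Real.pi) ≤ Real.exp 1.071 := Real.exp_le_exp.mpr h1
  have h3 : Real.exp (1.071 : ℝ) = Real.exp 1 * Real.exp 0.071 := by
    rw [← Real.exp_add]; norm_num
  have h4 : Real.exp (0.071 : ℝ) ≤ 1 / 0.929 := by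
    have h := Real.add_one_le_exp (-0.071 : ℝ)
    rw [Real.exp_neg] at h
    rw [le_div_iff₀ (by norm_num)]
    have hp := Real.exp_pos (0.071 : ℝ)
    have h5 : Real.exp 0.071 * (0.929 : ℝ) ≤ Real.exp 0.071 * (Real.exp 0.071)⁻¹ := by
      apply mul_le_mul_of_nonneg_left _ hp.le
      linarith
    rwa [mul_inv_cancel₀ hp.ne'] at h5
  have h6 : Real.exp 1 ≤ 2.7182818286 := Real.exp_one_lt_d9.le
  calc Real.exp (0.34 * Real.pi) ≤ Real.exp 1 * Real.exp 0.071 := by rw [← h3]; exact h2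
    _ ≤ 2.7182818286 * (1 / 0.929) := by
        apply mul_le_mul h6 h4 (Real.exp_pos _).le (by norm_num)
    _ ≤ 3.0625 := by norm_num

/-- `Γ(x) ≤ 4` for `1/4 ≤ x ≤ 1`. -/
lemma gamma_le_four {x : ℝ} (h1 : 1 / 4 ≤ x) (h2 : x ≤ 1) : Real.Gamma x ≤ 4 := by
  have hx0 : 0 < x := by linarith
  have hΓpos : 0 < Real.Gamma x := Real.Gamma_pos_of_pos hx0
  have hc := Real.convexOn_log_Gamma
  have h12 := hc.2 (Set.mem_Ioi.mpr one_pos) (Set.mem_Ioi.mpr two_pos)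
    (by linarith : (0:ℝ) ≤ 1 - x) hx0.le (by ring)
  have heq : (1 - x) • (1 : ℝ) + x • (2 : ℝ) = 1 + x := by
    rw [smul_eq_mul, smul_eq_mul]; ring
  rw [heq] at h12
  simp only [Function.comp_apply, Real.Gamma_one, Real.Gamma_two, Real.log_one,
    smul_eq_mul, mul_zero, add_zero] at h12
  have hΓ1x : Real.Gamma (1 + x) ≤ 1 := by
    have hpos : 0 < Real.Gamma (1 + x) := Real.Gamma_pos_of_pos (by linarith)
    have := Real.exp_le_exp.mpr h12
    rwa [Real.exp_log hpos, Real.exp_zero] at this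
  have hrec : Real.Gamma (x + 1) = x * Real.Gamma x := Real.Gamma_add_one hx0.ne'
  rw [add_comm] at hΓ1x
  rw [hrec] at hΓ1x
  nlinarith [mul_nonneg (by linarith : (0:ℝ) ≤ x - 1/4) hΓpos.le]

set_option maxHeartbeats 1600000 in
/-- Lemma F.1: for `1/4 ≤ x ≤ 1/2` and all real `y`, `|Γ(x + iy)| ≤ 7·e^{-π|y|/2}`. -/
theorem explicit_gamma_bound (x y : ℝ) (h1 : 1 / 4 ≤ x) (h2 : x ≤ 1 / 2) :
    ‖Complex.Gamma ((x : ℂ) + (y : ℂ) * Complex.I)‖ ≤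
      7 * Real.exp (-Real.pi * |y| / 2) := by
  have hx0 : 0 < x := by linarith
  set s : ℂ := (x : ℂ) + (y : ℂ) * Complex.I with hs
  set A := ‖Complex.Gamma s‖ with hA
  set B := ‖Complex.Gamma (((1 - x : ℝ) : ℂ) + (y : ℂ) * Complex.I)‖ with hB
  set M := ‖Complex.sin ((Real.pi : ℂ) * s)‖ with hM
  have hGx : Real.Gamma x ≤ 4 := gamma_le_four h1 (by linarith)
  have hGxpos : 0 < Real.Gamma x := Real.Gamma_pos_of_pos hx0
  have hG1xpos : 0 < Real.Gamma (1 - x) := Real.Gamma_pos_of_pos (by linarith)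
  have hsinx_pos : 0 < Real.sin (Real.pi * x) :=
    Real.sin_pos_of_pos_of_lt_pi (by positivity) (by nlinarith [Real.pi_pos])
  have hsinx_le : Real.sin (Real.pi * x) ≤ 1 := Real.sin_le_one _
  -- |sin(πs)|² = (sin πx cosh πy)² + (cos πx sinh πy)²
  have habs_sin_sq : M ^ 2 = (Real.sin (Real.pi * x) * Real.cosh (Real.pi * y)) ^ 2 +
      (Real.cos (Real.pi * x) * Real.sinh (Real.pi * y)) ^ 2 := by
    rw [hM, show (Real.pi : ℂ) * s = ((Real.pi * x : ℝ) : ℂ) + ((Real.pi * y : ℝ) : ℂ) * Complex.I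
        by rw [hs]; push_cast; ring,
      Complex.sin_add_mul_I, ← Complex.ofReal_sin, ← Complex.ofReal_cos,
      ← Complex.ofReal_cosh, ← Complex.ofReal_sinh, ← Complex.ofReal_mul,
      ← Complex.ofReal_mul, Complex.sq_norm, Complex.normSq_add_mul_I]
  have hMnonneg : 0 ≤ M := norm_nonneg _
  -- lower bounds for M
  have hA1 : Real.sin (Real.pi * x) ≤ M := by
    refine le_of_pow_le_pow_left₀ two_ne_zero hMnonneg ?_
    rw [habs_sin_sq]
    have hcosh2 : 1 ≤ Real.cosh (Real.pi * y) ^ 2 := by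
      nlinarith [Real.one_le_cosh (Real.pi * y)]
    nlinarith [mul_le_mul_of_nonneg_left hcosh2 (sq_nonneg (Real.sin (Real.pi * x))),
      sq_nonneg (Real.cos (Real.pi * x) * Real.sinh (Real.pi * y))]
  have hA2 : Real.sinh (Real.pi * |y|) ≤ M := by
    refine le_of_pow_le_pow_left₀ two_ne_zero hMnonneg ?_
    have h1' : Real.sinh (Real.pi * |y|) = |Real.sinh (Real.pi * y)| := by
      rw [Real.abs_sinh, abs_mul, abs_of_pos Real.pi_pos]
    have hc := Real.cosh_sq (Real.pi * y)
    have hsc := Real.sin_sq_add_cos_sq (Real.pi * x)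
    have hiden : (Real.sin (Real.pi * x) * Real.cosh (Real.pi * y)) ^ 2 +
        (Real.cos (Real.pi * x) * Real.sinh (Real.pi * y)) ^ 2 =
        Real.sinh (Real.pi * y) ^ 2 + Real.sin (Real.pi * x) ^ 2 := by
      nlinarith [hc, hsc, sq_nonneg (Real.sin (Real.pi * x) * Real.sinh (Real.pi * y))]
    rw [habs_sin_sq, h1', _root_.sq_abs, hiden]
    nlinarith [sq_nonneg (Real.sin (Real.pi * x))]
  have hMpos : 0 < M := lt_of_lt_of_le hsinx_pos hA1
  -- reflection
  have h1' : (1 : ℂ) - s = (starRingEnd ℂ) (((1 - x : ℝ) : ℂ) + (y : ℂ) * Complex.I) := by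
    rw [map_add, map_mul, Complex.conj_ofReal, Complex.conj_ofReal, Complex.conj_I, hs]
    push_cast; ring
  have h4' : ‖Complex.Gamma (1 - s)‖ = B := by
    rw [h1', Complex.Gamma_conj, Complex.norm_conj]
  have hrefl : A * B = Real.pi / M := by
    rw [hA, ← h4', ← norm_mul, Complex.Gamma_mul_Gamma_one_sub s, norm_div,
      Complex.norm_real, Real.norm_eq_abs, abs_of_pos Real.pi_pos, hM]
  -- monotonicity
  have hmono := abs_gamma_mul_mono y hx0 (by linarith : x ≤ 1 - x)
  rw [← hs, ← hA, ← hB] at hmono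
  -- key bound
  have hrr := Real.Gamma_mul_Gamma_one_sub x
  rw [eq_div_iff hsinx_pos.ne'] at hrr
  have hAnonneg : 0 ≤ A := norm_nonneg _
  have hstep : A ^ 2 * Real.Gamma (1 - x) * M ≤ Real.pi * Real.Gamma x := by
    calc A ^ 2 * Real.Gamma (1 - x) * M = (A * (A * Real.Gamma (1 - x))) * M := by ring
      _ ≤ (A * (B * Real.Gamma x)) * M := by
          apply mul_le_mul_of_nonneg_right (mul_le_mul_of_nonneg_left hmono hAnonneg) hMnonneg
      _ = (A * B) * M * Real.Gamma x := by ring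
      _ = Real.pi / M * M * Real.Gamma x := by rw [hrefl]
      _ = Real.pi * Real.Gamma x := by rw [div_mul_cancel₀ _ hMpos.ne']
  have hkey : A ^ 2 * M ≤ Real.Gamma x ^ 2 * Real.sin (Real.pi * x) := by
    have hrr2 : Real.Gamma x ^ 2 * Real.sin (Real.pi * x) * Real.Gamma (1 - x) =
        Real.pi * Real.Gamma x := by linear_combination Real.Gamma x * hrr
    have h2' : A ^ 2 * M * Real.Gamma (1 - x) ≤
        Real.Gamma x ^ 2 * Real.sin (Real.pi * x) * Real.Gamma (1 - x) := by
      rw [hrr2]; linarith [hstep]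
    exact le_of_mul_le_mul_right h2' hG1xpos
  -- reduce to squared bound
  have hsq_goal : A ^ 2 ≤ 49 * Real.exp (-(Real.pi * |y|)) →
      A ≤ 7 * Real.exp (-Real.pi * |y| / 2) := by
    intro h
    refine le_of_pow_le_pow_left₀ two_ne_zero (by positivity) ?_
    have hexpand : (7 * Real.exp (-Real.pi * |y| / 2)) ^ 2 =
        49 * Real.exp (-(Real.pi * |y|)) := by
      rw [show -(Real.pi * |y|) = -Real.pi * |y| / 2 + -Real.pi * |y| / 2 by ring,
        Real.exp_add]
      ring
    rw [hexpand]; exact h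
  apply hsq_goal
  have hGx2 : Real.Gamma x ^ 2 ≤ 16 := by nlinarith
  by_cases hy : |y| ≤ 0.34
  · -- small |y|
    have hA16 : A ^ 2 ≤ 16 := by
      have h16M : A ^ 2 * M ≤ 16 * M := by
        calc A ^ 2 * M ≤ Real.Gamma x ^ 2 * Real.sin (Real.pi * x) := hkey
          _ ≤ 16 * M := by nlinarith
      exact le_of_mul_le_mul_right h16M hMpos
    have hexp : Real.exp (Real.pi * |y|) ≤ 3.0625 := by
      refine le_trans (Real.exp_le_exp.mpr ?_) exp_034pi_le
      nlinarith [Real.pi_pos, abs_nonneg y]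
    have hfin : (16 : ℝ) ≤ 49 * Real.exp (-(Real.pi * |y|)) := by
      rw [Real.exp_neg, ← div_eq_mul_inv, le_div_iff₀ (Real.exp_pos _)]
      nlinarith
    linarith
  · -- large |y|
    push_neg at hy
    set t := Real.pi * |y| with ht
    have htpos : (1.06 : ℝ) ≤ t := by
      rw [ht]; nlinarith [Real.pi_gt_d2, abs_nonneg y]
    have hsinh_pos : 0 < Real.sinh t := Real.sinh_pos_iff.mpr (by linarith)
    have hAbound : A ^ 2 ≤ 16 / Real.sinh t := by
      rw [le_div_iff₀ hsinh_pos]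
      calc A ^ 2 * Real.sinh t ≤ A ^ 2 * M :=
            mul_le_mul_of_nonneg_left hA2 (sq_nonneg A)
        _ ≤ Real.Gamma x ^ 2 * Real.sin (Real.pi * x) := hkey
        _ ≤ 16 := by nlinarith
    refine hAbound.trans ?_
    have hexp2t : (49 : ℝ) / 17 ≤ Real.exp (2 * t) := by
      have := Real.add_one_le_exp (2 * t)
      linarith
    have hexpneg : Real.exp (-(2 * t)) ≤ 17 / 49 := by
      rw [Real.exp_neg]
      calc (Real.exp (2 * t))⁻¹ ≤ ((49 : ℝ) / 17)⁻¹ := by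
            apply inv_anti₀ (by norm_num) hexp2t
        _ = 17 / 49 := by norm_num
    have hEne := (Real.exp_pos t).ne'
    have hE2 : Real.exp (-(2 * t)) = (Real.exp t)⁻¹ * (Real.exp t)⁻¹ := by
      rw [show -(2 * t) = -t + -t by ring, Real.exp_add, Real.exp_neg]
    have hexpand : 49 * Real.exp (-t) * Real.sinh t = 24.5 * (1 - Real.exp (-(2 * t))) := by
      rw [Real.sinh_eq, hE2, Real.exp_neg]
      field_simp
      ring
    have h16 : (16 : ℝ) ≤ 49 * Real.exp (-t) * Real.sinh t := by
      rw [hexpand]; nlinarith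
    rw [div_le_iff₀ hsinh_pos]
    linarith
end
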